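/- arXiv:1202.6565 — 6 statements merged into one kernel-verified Lean document; each statement's English description precedes it below -/
import Mathlib

section
/- Let f : ℍ² → 𝔻 be the Möbius transformation f(z) = (z − i)/(z + i) of the upper half plane onto the unit disk. Then for all x, y ∈ ℍ²: j_𝔻(f(x), f(y)) ≤ 2 · j_{ℍ²}(x, y). -/
open Metric Filter Topology Set

/-- The distance ratio metric of a domain `G`:
`j_G(x,y) = log(1 + |x-y| / min(d(x,∂G), d(y,∂G)))`. -/
noncomputable def jdist {E : Type*} [PseudoMetricSpace E] (G : Set E) (x y : E) : ℝ :=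
  Real.log (1 + dist x y /
    min (Metric.infDist x (frontier G)) (Metric.infDist y (frontier G)))

lemma my_le_infDist {s : Set ℂ} (hs : s.Nonempty) {x : ℂ} {b : ℝ}
    (h : ∀ y ∈ s, b ≤ dist x y) : b ≤ Metric.infDist x s := by
  rw [Metric.infDist_eq_iInf]
  have : Nonempty s := hs.to_subtype
  exact le_ciInf fun y => h y y.2

lemma infDist_halfplane (z : ℂ) :
    Metric.infDist z (frontier {w : ℂ | 0 < w.im}) = |z.im| := by
  rw [Complex.frontier_setOf_lt_im]
  apply le_antisymm
  · have hm : (z.re : ℂ) ∈ {w : ℂ | w.im = 0} := by simp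
    calc Metric.infDist z {w : ℂ | w.im = 0} ≤ dist z z.re :=
          Metric.infDist_le_dist_of_mem hm
      _ = |z.im| := by
          rw [Complex.dist_eq]
          have : z - (z.re : ℂ) = z.im * Complex.I := by
            apply Complex.ext <;> simp
          rw [this]
          simp
  · refine my_le_infDist ⟨0, by simp⟩ fun w hw => ?_
    rw [Complex.dist_eq]
    have h2 := Complex.abs_im_le_norm (z - w)
    rw [Complex.sub_im, hw.out, sub_zero] at h2
    exact h2

lemma infDist_disk {w : ℂ} (h : ‖w‖ < 1) :
    Metric.infDist w (frontier (Metric.ball (0:ℂ) 1)) = 1 - ‖w‖ := by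
  rw [frontier_ball (0:ℂ) one_ne_zero]
  apply le_antisymm
  · rcases eq_or_ne w 0 with rfl | hw
    · have h1 : (1:ℂ) ∈ sphere (0:ℂ) 1 := by simp
      calc Metric.infDist (0:ℂ) (sphere (0:ℂ) 1) ≤ dist (0:ℂ) 1 :=
            Metric.infDist_le_dist_of_mem h1
        _ = 1 - ‖(0:ℂ)‖ := by simp [Complex.dist_eq]
    · have hwa : ‖w‖ ≠ 0 := by simpa using hw
      set u : ℂ := ((‖w‖)⁻¹ : ℝ) • w with hu
      have hus : u ∈ sphere (0:ℂ) 1 := by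
        simp [hu, norm_smul, abs_of_nonneg (inv_nonneg.2 (norm_nonneg w)), inv_mul_cancel₀ hwa]
      calc Metric.infDist w (sphere (0:ℂ) 1) ≤ dist w u :=
            Metric.infDist_le_dist_of_mem hus
        _ = 1 - ‖w‖ := by
            rw [dist_eq_norm, hu]
            have : w - ((‖w‖)⁻¹ : ℝ) • w = ((1 - (‖w‖)⁻¹ : ℝ)) • w := by
              rw [sub_smul, one_smul]
            rw [this, norm_smul, Real.norm_eq_abs]
            have hlt : (‖w‖)⁻¹ ≥ 1 := (one_le_inv₀ (norm_pos_iff.mpr hw)).2 h.le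
            rw [abs_of_nonpos (by linarith)]
            field_simp
            ring
  · refine my_le_infDist ⟨1, by simp⟩ fun u hu => ?_
    rw [mem_sphere_zero_iff_norm] at hu
    have h2 := norm_sub_norm_le u w
    rw [hu] at h2
    rw [Complex.dist_eq]
    calc 1 - ‖w‖ ≤ ‖u - w‖ := by
          simpa using h2
      _ = ‖w - u‖ := by rw [← norm_neg, neg_sub]

/-- norm bound for the Cayley transform -/
lemma cayley_abs_lt {x : ℂ} (hx : 0 < x.im) :
    ‖(x - Complex.I) / (x + Complex.I)‖ < 1 ∧
    2 * x.im / (‖x + Complex.I‖)^2 ≤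
      1 - ‖(x - Complex.I) / (x + Complex.I)‖ := by
  have ha0 : x + Complex.I ≠ 0 := by
    intro h
    have := congrArg Complex.im h
    simp at this
    linarith
  have hA : 0 < ‖x + Complex.I‖ := norm_pos_iff.mpr ha0
  have hsq : (‖x - Complex.I‖)^2 = (‖x + Complex.I‖)^2 - 4 * x.im := by
    rw [Complex.sq_norm, Complex.sq_norm, Complex.normSq_apply, Complex.normSq_apply]
    simp [Complex.add_re, Complex.add_im, Complex.sub_re, Complex.sub_im]
    ring
  have habs : ‖(x - Complex.I) / (x + Complex.I)‖
      = ‖x - Complex.I‖ / ‖x + Complex.I‖ := norm_div _ _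
  set C := ‖x - Complex.I‖ with hC
  set A := ‖x + Complex.I‖ with hA'
  have hC0 : 0 ≤ C := norm_nonneg _
  have hCA : C < A := by nlinarith
  constructor
  · rw [habs]
    rw [div_lt_one hA]
    exact hCA
  · rw [habs]
    have he : 1 - C / A = (A - C) / A := by field_simp
    rw [he, div_le_div_iff₀ (by positivity) hA]
    nlinarith [mul_nonneg (mul_nonneg (sub_nonneg.2 hCA.le) (sub_nonneg.2 hCA.le)) hA.le]

/-- The Möbius transformation `f(z) = (z-i)/(z+i)` of the upper half plane onto
the unit disk satisfies `j_𝔻(f x, f y) ≤ 2 j_{ℍ²}(x, y)`. -/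
theorem cayley_jdist_lipschitz (f : ℂ → ℂ)
    (hf : ∀ z, f z = (z - Complex.I) / (z + Complex.I)) :
    ∀ x ∈ {z : ℂ | 0 < z.im}, ∀ y ∈ {z : ℂ | 0 < z.im},
      jdist (Metric.ball (0 : ℂ) 1) (f x) (f y) ≤ 2 * jdist {z : ℂ | 0 < z.im} x y := by
  intro x hx y hy
  have hx' : 0 < x.im := hx
  have hy' : 0 < y.im := hy
  have ha0 : x + Complex.I ≠ 0 := by
    intro h; have := congrArg Complex.im h; simp at this; linarith
  have hb0 : y + Complex.I ≠ 0 := by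
    intro h; have := congrArg Complex.im h; simp at this; linarith
  set A := ‖x + Complex.I‖ with hA'
  set B := ‖y + Complex.I‖ with hB'
  have hA : 0 < A := norm_pos_iff.mpr ha0
  have hB : 0 < B := norm_pos_iff.mpr hb0
  clear_value A B
  obtain ⟨hfx, hDx⟩ := cayley_abs_lt hx'
  obtain ⟨hfy, hDy⟩ := cayley_abs_lt hy'
  rw [← hf] at hfx hDx hfy hDy
  -- distance between images
  set d := ‖x - y‖ with hd'
  have hd : 0 ≤ d := norm_nonneg _
  clear_value d
  have hdist_f : ‖f x - f y‖ = 2 * d / (A * B) := by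
    have hfe : f x - f y = 2 * Complex.I * (x - y) / ((x + Complex.I) * (y + Complex.I)) := by
      rw [hf, hf]
      field_simp
      ring
    rw [hfe, norm_div, norm_mul, norm_mul, Complex.norm_two, Complex.norm_I, norm_mul]
    simp [hd', hA', hB']
  -- lower bounds on imaginary parts vs norms
  have hAim : x.im ≤ A := by
    have := Complex.abs_im_le_norm (x + Complex.I)
    rw [Complex.add_im, Complex.I_im] at this
    calc x.im ≤ |x.im + 1| := by rw [abs_of_pos (by linarith)]; linarith
      _ ≤ A := by rw [hA']; exact this
  have hBim : y.im ≤ B := by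
    have := Complex.abs_im_le_norm (y + Complex.I)
    rw [Complex.add_im, Complex.I_im] at this
    calc y.im ≤ |y.im + 1| := by rw [abs_of_pos (by linarith)]; linarith
      _ ≤ B := by rw [hB']; exact this
  have hAB : A ≤ B + d := by
    calc A = ‖y + Complex.I + (x - y)‖ := by rw [hA']; ring_nf
      _ ≤ B + d := by
          rw [hB', hd']; exact norm_add_le _ _
  have hBA : B ≤ A + d := by
    calc B = ‖x + Complex.I + (y - x)‖ := by rw [hB']; ring_nf
      _ ≤ A + d := by
          rw [hA', hd']
          calc ‖x + Complex.I + (y - x)‖ ≤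
              ‖x + Complex.I‖ + ‖y - x‖ := norm_add_le _ _
            _ = ‖x + Complex.I‖ + ‖x - y‖ := by
                rw [← norm_neg (y - x), neg_sub]
  -- unfold jdist
  rw [jdist, jdist, infDist_disk hfx, infDist_disk hfy, infDist_halfplane, infDist_halfplane,
    abs_of_pos hx', abs_of_pos hy']
  set m := min x.im y.im with hm'
  have hm : 0 < m := lt_min hx' hy'
  clear_value m
  set D := min (1 - ‖f x‖) (1 - ‖f y‖) with hD'
  have hD : 0 < D := lt_min (by linarith) (by linarith)
  clear_value D
  set S := d / m with hS'
  have hS : 0 ≤ S := div_nonneg hd hm.le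
  clear_value S
  have hdxy : dist x y = d := by rw [hd']; exact Complex.dist_eq x y
  have hdfxy : dist (f x) (f y) = 2 * d / (A * B) := by
    rw [Complex.dist_eq, hdist_f]
  rw [hdxy, hdfxy, ← hS']
  -- key inequality
  have hmx : m ≤ x.im := by rw [hm']; exact min_le_left _ _
  have hmy : m ≤ y.im := by rw [hm']; exact min_le_right _ _
  have key : 2 * d / (A * B) / D ≤ S + S ^ 2 := by
    have hDmin : min (2 * x.im / A ^ 2) (2 * y.im / B ^ 2) ≤ D := by
      rw [hD', hA', hB']
      exact le_min (le_trans (min_le_left _ _) hDx) (le_trans (min_le_right _ _) hDy)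
    have hmin0 : 0 < min (2 * x.im / A ^ 2) (2 * y.im / B ^ 2) := by positivity
    rw [div_le_iff₀ hD]
    have main : 2 * d / (A * B) ≤ (S + S ^ 2) * min (2 * x.im / A ^ 2) (2 * y.im / B ^ 2) := by
      rcases le_total (2 * x.im / A ^ 2) (2 * y.im / B ^ 2) with h | h
      · rw [min_eq_left h, hS']
        have he : (d / m + (d / m) ^ 2) * (2 * x.im / A ^ 2)
            = 2 * (d * (m + d) * x.im) / (m ^ 2 * A ^ 2) := by
          field_simp
        rw [he, div_le_div_iff₀ (by positivity) (by positivity)]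
        have h1 : d * A * (m * m) ≤ d * (B + d) * (m * m) := by gcongr
        have h2 : d * B * (m * m) ≤ d * B * (m * x.im) := by gcongr
        have h3 : d * d * (m * m) ≤ d * d * (x.im * B) := by
          have hmB : m ≤ B := hmy.trans hBim
          gcongr
        have h4 : d * A * (m * m) ≤ d * (m + d) * x.im * B := by
          have : d * (B + d) * (m * m) = d * B * (m * m) + d * d * (m * m) := by ring
          have : d * B * (m * x.im) + d * d * (x.im * B) = d * (m + d) * x.im * B := by ring
          linarith [h1, h2, h3,
            (by ring : d * (B + d) * (m * m) = d * B * (m * m) + d * d * (m * m)),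
            (by ring : d * B * (m * x.im) + d * d * (x.im * B) = d * (m + d) * x.im * B)]
        calc 2 * d * (m ^ 2 * A ^ 2) = 2 * A * (d * A * (m * m)) := by ring
          _ ≤ 2 * A * (d * (m + d) * x.im * B) :=
              mul_le_mul_of_nonneg_left h4 (by positivity)
          _ = 2 * (d * (m + d) * x.im) * (A * B) := by ring
      · rw [min_eq_right h, hS']
        have he : (d / m + (d / m) ^ 2) * (2 * y.im / B ^ 2)
            = 2 * (d * (m + d) * y.im) / (m ^ 2 * B ^ 2) := by
          field_simp
        rw [he, div_le_div_iff₀ (by positivity) (by positivity)]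
        have h1 : d * B * (m * m) ≤ d * (A + d) * (m * m) := by gcongr
        have h2 : d * A * (m * m) ≤ d * A * (m * y.im) := by gcongr
        have h3 : d * d * (m * m) ≤ d * d * (y.im * A) := by
          have hmA : m ≤ A := hmx.trans hAim
          gcongr
        have h4 : d * B * (m * m) ≤ d * (m + d) * y.im * A := by
          linarith [h1, h2, h3,
            (by ring : d * (A + d) * (m * m) = d * A * (m * m) + d * d * (m * m)),
            (by ring : d * A * (m * y.im) + d * d * (y.im * A) = d * (m + d) * y.im * A)]
        calc 2 * d * (m ^ 2 * B ^ 2) = 2 * B * (d * B * (m * m)) := by ring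
          _ ≤ 2 * B * (d * (m + d) * y.im * A) :=
              mul_le_mul_of_nonneg_left h4 (by positivity)
          _ = 2 * (d * (m + d) * y.im) * (A * B) := by ring
    calc 2 * d / (A * B) ≤ (S + S ^ 2) * min (2 * x.im / A ^ 2) (2 * y.im / B ^ 2) := main
      _ ≤ (S + S ^ 2) * D := by
          apply mul_le_mul_of_nonneg_left hDmin (by positivity)
  -- conclude with logs
  have hlhs : (0:ℝ) < 1 + 2 * d / (A * B) / D := by positivity
  have hstep : 1 + 2 * d / (A * B) / D ≤ (1 + S) ^ 2 := by nlinarith [key, hS, sq_nonneg S]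
  calc Real.log (1 + 2 * d / (A * B) / D) ≤ Real.log ((1 + S) ^ 2) :=
        Real.log_le_log hlhs hstep
    _ = 2 * Real.log (1 + S) := by
        rw [Real.log_pow]; norm_num
end

section
/- Let f(z) = i(1 + z)/(1 − z), so that f maps 𝔻 \ {0} onto ℍ² \ {i} with f(0) = i. Then for all x, y ∈ 𝔻 \ {0}: j_{ℍ²∖{i}}(f(x), f(y)) ≤ 2 · j_{𝔻∖{0}}(x, y), and the constant 2 is best possible: for x = t and y = −t with 1/2 < t < 1 one has j_{ℍ²∖{i}}(f(x), f(y)) = 2 · j_{𝔻∖{0}}(x, y). -/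
open Metric Filter Topology Set

namespace InverseCayleyAux

lemma le_infDist' {s : Set ℂ} (hs : s.Nonempty) {x : ℂ} {d : ℝ}
    (H : ∀ y ∈ s, d ≤ dist x y) : d ≤ Metric.infDist x s := by
  by_contra h
  push_neg at h
  obtain ⟨y, hy, hlt⟩ := (Metric.infDist_lt_iff hs).1 h
  exact absurd (H y hy) (not_le.2 hlt)

/-! ### The punctured disk -/

lemma disk_open : IsOpen (Metric.ball (0:ℂ) 1 \ {0}) :=
  Metric.isOpen_ball.sdiff isClosed_singleton

lemma disk_frontier_sub :
    frontier (Metric.ball (0:ℂ) 1 \ {0}) ⊆ Metric.sphere 0 1 ∪ {0} := by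
  intro z hz
  rw [frontier, disk_open.interior_eq] at hz
  have h1 : z ∈ Metric.closedBall (0:ℂ) 1 := by
    have := hz.1
    have hmono := closure_mono (diff_subset (s := Metric.ball (0:ℂ) 1) (t := ({0}:Set ℂ)))
    have := hmono this
    rwa [closure_ball (0:ℂ) one_ne_zero] at this
  rcases eq_or_ne z 0 with h0 | h0
  · exact Or.inr h0
  · left
    have h2 := hz.2
    simp only [mem_diff, Metric.mem_ball, mem_singleton_iff, not_and, not_not] at h2
    simp only [Metric.mem_closedBall] at h1
    have : ¬ dist z 0 < 1 := fun hlt => h0 (h2 hlt)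
    simpa [Metric.mem_sphere] using le_antisymm h1 (not_lt.1 this)

lemma zero_mem_disk_frontier : (0:ℂ) ∈ frontier (Metric.ball (0:ℂ) 1 \ {0}) := by
  rw [frontier, disk_open.interior_eq]
  refine ⟨Metric.mem_closure_iff.2 fun ε hε => ?_, by simp⟩
  have hm : (0:ℝ) < min ε 1 / 2 := by positivity
  have hm1 : min ε 1 / 2 < 1 := by
    have : min ε 1 ≤ 1 := min_le_right _ _; linarith
  have hmε : min ε 1 / 2 < ε := by
    have : min ε 1 ≤ ε := min_le_left _ _; linarith
  refine ⟨(min ε 1 / 2 : ℝ), ⟨?_, ?_⟩, ?_⟩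
  · simp only [Metric.mem_ball, Complex.dist_eq, sub_zero, Complex.norm_real, Real.norm_eq_abs]
    rwa [abs_of_pos hm]
  · simp only [mem_singleton_iff]
    intro h
    exact absurd (by exact_mod_cast h : min ε 1 / 2 = (0:ℝ)) (ne_of_gt hm)
  · simp only [Complex.dist_eq, zero_sub, norm_neg, Complex.norm_real, Real.norm_eq_abs]
    rwa [abs_of_pos hm]

lemma sphere_mem_disk_frontier {u : ℂ} (hu : ‖u‖ = 1) :
    u ∈ frontier (Metric.ball (0:ℂ) 1 \ {0}) := by
  rw [frontier, disk_open.interior_eq]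
  constructor
  · refine Metric.mem_closure_iff.2 fun ε hε => ?_
    set r : ℝ := 1 - min ε 1 / 2 with hr
    have hr0 : 0 < r := by
      have : min ε 1 ≤ 1 := min_le_right _ _
      simp only [hr]; linarith [lt_min hε one_pos]
    have hr1 : r < 1 := by
      have : (0:ℝ) < min ε 1 / 2 := by positivity
      simp only [hr]; linarith
    refine ⟨(r:ℂ) * u, ⟨?_, ?_⟩, ?_⟩
    · simp only [Metric.mem_ball, Complex.dist_eq, sub_zero, norm_mul, Complex.norm_real, Real.norm_eq_abs, hu,
        mul_one]
      rwa [abs_of_pos hr0]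
    · simp only [mem_singleton_iff, mul_eq_zero, not_or]
      constructor
      · exact_mod_cast ne_of_gt hr0
      · intro h; rw [h, norm_zero] at hu; norm_num at hu
    · have : u - (r:ℂ) * u = ((1 - r : ℝ) : ℂ) * u := by push_cast; ring
      rw [Complex.dist_eq, this, norm_mul, Complex.norm_real, Real.norm_eq_abs, hu, mul_one,
        abs_of_pos (by linarith)]
      have : min ε 1 ≤ ε := min_le_left _ _
      simp only [hr]; linarith
  · simp [hu]

lemma infDist_disk {x : ℂ} (hx1 : ‖x‖ < 1) (hx0 : x ≠ 0) :
    Metric.infDist x (frontier (Metric.ball (0:ℂ) 1 \ {0})) =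
      min (1 - ‖x‖) (‖x‖) := by
  have habs : (0:ℝ) < ‖x‖ := by
    simpa [norm_pos_iff] using hx0
  apply le_antisymm
  · rcases le_total (1 - ‖x‖) (‖x‖) with h | h
    · rw [min_eq_left h]
      have hu : ‖(‖x‖)⁻¹ • x‖ = 1 := by
        simp [norm_smul, abs_of_pos (inv_pos.2 habs), inv_mul_cancel₀ (ne_of_gt habs)]
      calc Metric.infDist x _ ≤ dist x ((‖x‖)⁻¹ • x) :=
            Metric.infDist_le_dist_of_mem (sphere_mem_disk_frontier hu)
        _ = 1 - ‖x‖ := by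
            rw [Complex.dist_eq]
            have : x - (‖x‖)⁻¹ • x = ((1 - (‖x‖)⁻¹ : ℝ) : ℂ) * x := by
              push_cast [Complex.real_smul]; ring
            rw [this, norm_mul, Complex.norm_real, Real.norm_eq_abs]
            rw [abs_of_nonpos (by
              have h1 : (1:ℝ) ≤ (‖x‖)⁻¹ := one_le_inv₀ habs |>.2 (le_of_lt hx1)
              linarith)]
            field_simp
            ring
    · rw [min_eq_right h]
      calc Metric.infDist x _ ≤ dist x 0 :=
            Metric.infDist_le_dist_of_mem zero_mem_disk_frontier
        _ = ‖x‖ := by simp [Complex.dist_eq]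
  · refine le_infDist' ⟨0, zero_mem_disk_frontier⟩ fun z hz => ?_
    rcases disk_frontier_sub hz with h | h
    · simp only [Metric.mem_sphere, Complex.dist_eq, sub_zero] at h
      calc min (1 - ‖x‖) (‖x‖) ≤ 1 - ‖x‖ := min_le_left _ _
        _ ≤ ‖z‖ - ‖x‖ := by rw [h]
        _ ≤ ‖z - x‖ := by
            simpa using norm_sub_norm_le z x
        _ = dist x z := by rw [Complex.dist_eq, norm_sub_rev]
    · simp only [mem_singleton_iff] at h
      subst h
      calc min (1 - ‖x‖) (‖x‖) ≤ ‖x‖ := min_le_right _ _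
        _ = dist x 0 := by simp [Complex.dist_eq]

/-! ### The punctured half-plane -/

lemma half_open : IsOpen ({z : ℂ | 0 < z.im} \ {Complex.I}) :=
  (isOpen_lt continuous_const Complex.continuous_im).sdiff isClosed_singleton

lemma half_frontier_sub :
    frontier ({z : ℂ | 0 < z.im} \ {Complex.I}) ⊆ {z : ℂ | z.im = 0} ∪ {Complex.I} := by
  intro z hz
  rw [frontier, half_open.interior_eq] at hz
  have h1 : 0 ≤ z.im := by
    have := closure_mono (diff_subset (s := {z : ℂ | 0 < z.im}) (t := ({Complex.I}:Set ℂ))) hz.1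
    have h2 : closure {z : ℂ | 0 < z.im} ⊆ {z : ℂ | 0 ≤ z.im} :=
      closure_minimal (fun w hw => (le_of_lt (mem_setOf.1 hw) : w ∈ {z : ℂ | 0 ≤ z.im}))
        (isClosed_le continuous_const Complex.continuous_im)
    exact h2 this
  have h2 := hz.2
  simp only [mem_diff, mem_setOf_eq, mem_singleton_iff, not_and, not_not] at h2
  rcases lt_or_eq_of_le h1 with hlt | heq
  · exact Or.inr (h2 hlt)
  · exact Or.inl heq.symm

lemma I_mem_half_frontier : Complex.I ∈ frontier ({z : ℂ | 0 < z.im} \ {Complex.I}) := by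
  rw [frontier, half_open.interior_eq]
  refine ⟨Metric.mem_closure_iff.2 fun ε hε => ?_, by simp⟩
  refine ⟨Complex.I + (min ε 1 / 2 : ℝ) * Complex.I, ⟨?_, ?_⟩, ?_⟩
  · simp only [mem_setOf_eq, Complex.add_im, Complex.I_im, Complex.mul_im, Complex.ofReal_re,
      Complex.ofReal_im, Complex.I_re, Complex.I_im]
    have : (0:ℝ) < min ε 1 / 2 := by positivity
    nlinarith
  · simp only [mem_singleton_iff, add_eq_left, mul_eq_zero, Complex.I_ne_zero, or_false]
    intro h
    have : (min ε 1 / 2 : ℝ) = 0 := by exact_mod_cast h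
    have : (0:ℝ) < min ε 1 / 2 := by positivity
    linarith
  · have : Complex.I - (Complex.I + (min ε 1 / 2 : ℝ) * Complex.I)
        = -((min ε 1 / 2 : ℝ) * Complex.I) := by ring
    rw [Complex.dist_eq, this, norm_neg, norm_mul, Complex.norm_real, Real.norm_eq_abs, Complex.norm_I,
      mul_one, abs_of_pos (by positivity)]
    have : min ε 1 ≤ ε := min_le_left _ _
    linarith

lemma re_mem_half_frontier (r : ℝ) :
    (r : ℂ) ∈ frontier ({z : ℂ | 0 < z.im} \ {Complex.I}) := by
  rw [frontier, half_open.interior_eq]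
  constructor
  · refine Metric.mem_closure_iff.2 fun ε hε => ?_
    have hm : (0:ℝ) < min ε 1 / 2 := by positivity
    have hm1 : min ε 1 / 2 < 1 := by have : min ε 1 ≤ 1 := min_le_right _ _; linarith
    refine ⟨(r : ℂ) + (min ε 1 / 2 : ℝ) * Complex.I, ⟨?_, ?_⟩, ?_⟩
    · simp only [mem_setOf_eq, Complex.add_im, Complex.ofReal_im, Complex.mul_im,
        Complex.ofReal_re, Complex.I_im, Complex.I_re, Complex.ofReal_im]
      nlinarith
    · simp only [mem_singleton_iff]
      intro h
      have him := congrArg Complex.im h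
      simp only [Complex.add_im, Complex.ofReal_im, Complex.mul_im, Complex.ofReal_re,
        Complex.I_im, Complex.I_re, Complex.ofReal_im, Complex.I_im] at him
      simp only [mul_one, mul_zero, zero_add, add_zero] at him
      nlinarith [him]
    · have : (r:ℂ) - ((r:ℂ) + (min ε 1 / 2 : ℝ) * Complex.I)
          = -((min ε 1 / 2 : ℝ) * Complex.I) := by ring
      rw [Complex.dist_eq, this, norm_neg, norm_mul, Complex.norm_real, Real.norm_eq_abs, Complex.norm_I,
        mul_one, abs_of_pos hm]
      have : min ε 1 ≤ ε := min_le_left _ _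
      linarith
  · simp only [mem_diff, mem_setOf_eq, Complex.ofReal_im, not_and]
    intro h; exact absurd h (lt_irrefl 0)

lemma infDist_half {w : ℂ} (hw : 0 < w.im) :
    Metric.infDist w (frontier ({z : ℂ | 0 < z.im} \ {Complex.I})) =
      min w.im (dist w Complex.I) := by
  apply le_antisymm
  · rcases le_total w.im (dist w Complex.I) with h | h
    · rw [min_eq_left h]
      calc Metric.infDist w _ ≤ dist w (w.re : ℂ) :=
            Metric.infDist_le_dist_of_mem (re_mem_half_frontier w.re)
        _ = w.im := by
            rw [Complex.dist_eq]
            have : w - (w.re : ℂ) = w.im * Complex.I := by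
              apply Complex.ext <;> simp
            rw [this, norm_mul, Complex.norm_real, Real.norm_eq_abs, Complex.norm_I, mul_one, abs_of_pos hw]
    · rw [min_eq_right h]
      exact Metric.infDist_le_dist_of_mem I_mem_half_frontier
  · refine le_infDist' ⟨Complex.I, I_mem_half_frontier⟩ fun z hz => ?_
    rcases half_frontier_sub hz with h | h
    · simp only [mem_setOf_eq] at h
      calc min w.im (dist w Complex.I) ≤ w.im := min_le_left _ _
        _ = |(w - z).im| := by rw [Complex.sub_im, h, sub_zero, abs_of_pos hw]
        _ ≤ ‖w - z‖ := Complex.abs_im_le_norm _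
        _ = dist w z := (Complex.dist_eq w z).symm
    · simp only [mem_singleton_iff] at h
      subst h
      exact min_le_right _ _

/-! ### Identities for the Möbius map -/

lemma one_sub_ne {x : ℂ} (hx : ‖x‖ < 1) : (1:ℂ) - x ≠ 0 := by
  intro h
  have : x = 1 := by linear_combination -h
  rw [this] at hx; simp at hx

lemma f_sub {x y : ℂ} (hx : ‖x‖ < 1) (hy : ‖y‖ < 1) :
    Complex.I * (1 + x) / (1 - x) - Complex.I * (1 + y) / (1 - y)
      = 2 * Complex.I * (x - y) / ((1 - x) * (1 - y)) := by
  field_simp [one_sub_ne hx, one_sub_ne hy]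
  ring

lemma f_sub_I {x : ℂ} (hx : ‖x‖ < 1) :
    Complex.I * (1 + x) / (1 - x) - Complex.I = 2 * Complex.I * x / (1 - x) := by
  field_simp [one_sub_ne hx]
  ring

lemma abs_f_sub {x y : ℂ} (hx : ‖x‖ < 1) (hy : ‖y‖ < 1) :
    dist (Complex.I * (1 + x) / (1 - x)) (Complex.I * (1 + y) / (1 - y))
      = 2 * ‖x - y‖ / (‖1 - x‖ * ‖1 - y‖) := by
  rw [Complex.dist_eq, f_sub hx hy]
  simp [norm_div, norm_mul, Complex.norm_I]

lemma abs_f_sub_I {x : ℂ} (hx : ‖x‖ < 1) :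
    dist (Complex.I * (1 + x) / (1 - x)) Complex.I
      = 2 * ‖x‖ / ‖1 - x‖ := by
  rw [Complex.dist_eq, f_sub_I hx]
  simp [norm_div, norm_mul, Complex.norm_I]

lemma im_f {x : ℂ} (hx : ‖x‖ < 1) :
    (Complex.I * (1 + x) / (1 - x)).im
      = (1 - ‖x‖ ^ 2) / ‖1 - x‖ ^ 2 := by
  rw [Complex.div_im, Complex.sq_norm, Complex.sq_norm]
  have h := Complex.normSq_pos.2 (one_sub_ne hx)
  rw [div_sub_div_same, div_eq_div_iff (ne_of_gt h) (ne_of_gt h)]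
  simp only [Complex.normSq_apply, Complex.mul_re, Complex.mul_im, Complex.I_re, Complex.I_im,
    Complex.add_re, Complex.add_im, Complex.one_re, Complex.one_im, Complex.sub_re,
    Complex.sub_im]
  ring

lemma im_f_pos {x : ℂ} (hx : ‖x‖ < 1) :
    0 < (Complex.I * (1 + x) / (1 - x)).im := by
  rw [im_f hx]
  have h1 : ‖x‖ ^ 2 < 1 := by nlinarith [norm_nonneg x]
  have h2 : 0 < ‖1 - x‖ := by
    simpa [norm_pos_iff] using one_sub_ne hx
  have h3 : 0 < ‖1 - x‖ ^ 2 := by positivity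
  have h4 : 0 < 1 - ‖x‖ ^ 2 := by linarith
  positivity

/-! ### The core real inequalities -/

lemma C2 {a q m s : ℝ} (hm0 : 0 ≤ m) (hma : m ≤ a) (hmq : m ≤ q) (hm2 : 2*m ≤ 1)
    (hs0 : 0 ≤ s) (hs1 : 1 - a - q ≤ s) : m^2 ≤ a*q*(2*m+s) := by
  nlinarith [mul_nonneg (sub_nonneg.2 hma) (sub_nonneg.2 hmq), mul_nonneg hm0 hs0,
    mul_nonneg (mul_nonneg hm0 hm0) hs0, sq_nonneg (a-q), sq_nonneg (a+q-2*m),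
    mul_nonneg (sub_nonneg.2 hma) hs0, mul_nonneg (sub_nonneg.2 hmq) hs0,
    mul_nonneg (mul_nonneg (sub_nonneg.2 hma) (sub_nonneg.2 hmq)) hs0,
    mul_nonneg (mul_nonneg (sub_nonneg.2 hma) (sub_nonneg.2 hmq)) (sub_nonneg.2 hm2)]

lemma C1 {a p q m s : ℝ} (hm0 : 0 ≤ m) (hm2 : 2*m ≤ 1) (hma : m ≤ 1 - a) (hmq : m ≤ q)
    (ha0 : 0 ≤ a) (ha1 : a < 1) (hp0 : 0 < p) (hpa : p ≤ 1 + a) (hq0 : 0 < q) (hs0 : 0 ≤ s)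
    (hs1 : p - q ≤ s) : 2*p*m^2 ≤ q*(1-a^2)*(2*m+s) := by
  have hma2 : m ≤ 1 - a^2 := by nlinarith
  rcases le_total p q with hpq | hpq
  · nlinarith [mul_nonneg (mul_nonneg hq0.le hm0) (sub_nonneg.2 hma2),
      mul_nonneg (mul_nonneg hm0 hm0) (sub_nonneg.2 hpq),
      mul_nonneg (mul_nonneg hq0.le (by nlinarith : (0:ℝ) ≤ 1 - a^2)) hs0]
  · have hqa : q ≤ 1 + a := le_trans hpq hpa
    have hs2 : q*(1-a^2)*(2*m+s) ≥ q*(1-a^2)*(2*m+(p-q)) := by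
      have h1 : (0:ℝ) ≤ 1 - a^2 := by nlinarith
      nlinarith [mul_nonneg (mul_nonneg hq0.le h1) (sub_nonneg.2 hs1)]
    have hband : 2*m^2 ≤ q*(1-a)*(2*m+1+a-q) := by
      have key : (1+a-m) * (q*(1-a)*(2*m+1+a-q) - 2*m^2)
          = (1+a)*((1+a-q)*(m*(1-a-m))) + 2*((q-m)*(m*(1-a^2-m)))
            + (1+a-m)*((1-a)*((q-m)*(1+a-q))) := by ring
      have t1 : (0:ℝ) ≤ (1+a)*((1+a-q)*(m*(1-a-m))) := by
        apply mul_nonneg (by linarith)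
        exact mul_nonneg (by linarith) (mul_nonneg hm0 (by linarith))
      have t2 : (0:ℝ) ≤ 2*((q-m)*(m*(1-a^2-m))) := by
        apply mul_nonneg (by norm_num)
        exact mul_nonneg (by linarith) (mul_nonneg hm0 (by linarith))
      have t3 : (0:ℝ) ≤ (1+a-m)*((1-a)*((q-m)*(1+a-q))) := by
        apply mul_nonneg (by linarith)
        exact mul_nonneg (by linarith) (mul_nonneg (by linarith) (by linarith))
      nlinarith [key, t1, t2, t3, (by linarith : (0:ℝ) < 1+a-m)]
    rcases le_total (q*(1-a^2)) (2*m^2) with hc | hc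
    · nlinarith [mul_nonneg (sub_nonneg.2 hc) (sub_nonneg.2 hpa),
        mul_nonneg (sub_nonneg.2 hband) ha0]
    · nlinarith [mul_nonneg (sub_nonneg.2 hc) (sub_nonneg.2 hpq),
        mul_nonneg (mul_nonneg hq0.le hm0) (sub_nonneg.2 hma2),
        mul_nonneg (mul_nonneg hq0.le (by nlinarith : (0:ℝ) ≤ 1 - a^2)) (sub_nonneg.2 hs1)]

lemma side {a p q s m : ℝ} (ha0 : 0 < a) (ha1 : a < 1)
    (hp0 : 0 < p) (hpa : p ≤ 1+a) (hap : 1-a ≤ p) (hq0 : 0 < q)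
    (hm0 : 0 < m) (hma : m ≤ a) (hma' : m ≤ 1-a) (hmq : m ≤ q)
    (hs0 : 0 ≤ s) (hspq : p - q ≤ s) :
    1 + (2*s/(p*q)) / min ((1-a^2)/p^2) (2*a/p) ≤ (1 + s/m)^2 := by
  have ha2 : (0:ℝ) < 1 - a^2 := by nlinarith
  have hm2 : 2*m ≤ 1 := by linarith
  have hrhs : (1 + s/m)^2 = 1 + (s*(2*m+s))/m^2 := by field_simp; ring
  rw [hrhs]
  have main : (2*s/(p*q)) / min ((1-a^2)/p^2) (2*a/p) ≤ s*(2*m+s)/m^2 := by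
    rcases le_total ((1-a^2)/p^2) (2*a/p) with h | h
    · rw [min_eq_left h]
      have hkey := C1 hm0.le hm2 hma' hmq ha0.le ha1 hp0 hpa hq0 hs0 hspq
      have heq : (2*s/(p*q)) / ((1-a^2)/p^2) = 2*s*p/(q*(1-a^2)) := by
        field_simp
      rw [heq, div_le_div_iff₀ (by positivity) (by positivity)]
      nlinarith [mul_le_mul_of_nonneg_left hkey hs0]
    · rw [min_eq_right h]
      have hs1 : 1 - a - q ≤ s := by linarith
      have hkey := C2 hm0.le hma hmq hm2 hs0 hs1
      have heq : (2*s/(p*q)) / (2*a/p) = s/(q*a) := by field_simp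
      rw [heq, div_le_div_iff₀ (by positivity) (by positivity)]
      nlinarith [mul_le_mul_of_nonneg_left hkey hs0]
  linarith

lemma realmain {a b p q s : ℝ} (ha0 : 0 < a) (ha1 : a < 1) (hb0 : 0 < b) (hb1 : b < 1)
    (hp0 : 0 < p) (hpa : p ≤ 1+a) (hap : 1-a ≤ p)
    (hq0 : 0 < q) (hqb : q ≤ 1+b) (hbq : 1-b ≤ q)
    (hs0 : 0 ≤ s) (hspq : p - q ≤ s) (hsqp : q - p ≤ s) :
    Real.log (1 + 2*s/(p*q) /
        min (min ((1-a^2)/p^2) (2*a/p)) (min ((1-b^2)/q^2) (2*b/q)))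
      ≤ 2 * Real.log (1 + s / min (min (1-a) a) (min (1-b) b)) := by
  set m := min (min (1-a) a) (min (1-b) b) with hm
  have hm0 : 0 < m := lt_min (lt_min (by linarith) ha0) (lt_min (by linarith) hb0)
  have hma : m ≤ a := le_trans (min_le_left _ _) (min_le_right _ _)
  have hma' : m ≤ 1-a := le_trans (min_le_left _ _) (min_le_left _ _)
  have hmb : m ≤ b := le_trans (min_le_right _ _) (min_le_right _ _)
  have hmb' : m ≤ 1-b := le_trans (min_le_right _ _) (min_le_left _ _)
  have hb2 : (0:ℝ) < 1 - b^2 := by nlinarith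
  have ha2 : (0:ℝ) < 1 - a^2 := by nlinarith
  have hdx : (0:ℝ) < min ((1-a^2)/p^2) (2*a/p) := lt_min (by positivity) (by positivity)
  have hdy : (0:ℝ) < min ((1-b^2)/q^2) (2*b/q) := lt_min (by positivity) (by positivity)
  have harg : 1 + 2*s/(p*q) /
      min (min ((1-a^2)/p^2) (2*a/p)) (min ((1-b^2)/q^2) (2*b/q)) ≤ (1 + s/m)^2 := by
    rcases le_total (min ((1-a^2)/p^2) (2*a/p)) (min ((1-b^2)/q^2) (2*b/q)) with h | h
    · rw [min_eq_left h]
      exact side ha0 ha1 hp0 hpa hap hq0 hm0 hma hma' (le_trans hmb' hbq) hs0 hspq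
    · rw [min_eq_right h]
      have := side hb0 hb1 hq0 hqb hbq hp0 hm0 hmb hmb' (le_trans hma' hap) hs0 hsqp
      calc 1 + 2*s/(p*q) / min ((1-b^2)/q^2) (2*b/q)
          = 1 + 2*s/(q*p) / min ((1-b^2)/q^2) (2*b/q) := by rw [mul_comm p q]
        _ ≤ (1 + s/m)^2 := this
  have hpos : (0:ℝ) < 1 + 2*s/(p*q) /
      min (min ((1-a^2)/p^2) (2*a/p)) (min ((1-b^2)/q^2) (2*b/q)) := by
    have h1 : (0:ℝ) < min (min ((1-a^2)/p^2) (2*a/p)) (min ((1-b^2)/q^2) (2*b/q)) :=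
      lt_min hdx hdy
    have h2 : (0:ℝ) ≤ 2*s/(p*q) /
        min (min ((1-a^2)/p^2) (2*a/p)) (min ((1-b^2)/q^2) (2*b/q)) :=
      div_nonneg (by positivity) h1.le
    linarith
  calc Real.log _ ≤ Real.log ((1 + s/m)^2) := Real.log_le_log hpos harg
    _ = 2 * Real.log (1 + s/m) := by rw [Real.log_pow]; norm_num

end InverseCayleyAux

open InverseCayleyAux in
/-- For `f(z) = i(1+z)/(1-z) : 𝔻 \ {0} → ℍ² \ {i}` the inequality
`j_{ℍ²∖{i}}(f x, f y) ≤ 2 j_{𝔻∖{0}}(x, y)` holds, and the constant `2` is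
best possible: for `x = t`, `y = -t`, `1/2 < t < 1`, equality holds. -/
theorem inverse_cayley_punctured_jdist_sharp (f : ℂ → ℂ)
    (hf : ∀ z, f z = Complex.I * (1 + z) / (1 - z)) :
    (∀ x ∈ Metric.ball (0 : ℂ) 1 \ {0}, ∀ y ∈ Metric.ball (0 : ℂ) 1 \ {0},
        jdist ({z : ℂ | 0 < z.im} \ {Complex.I}) (f x) (f y) ≤
          2 * jdist (Metric.ball (0 : ℂ) 1 \ {0}) x y) ∧
      ∀ t : ℝ, 1 / 2 < t → t < 1 →
        jdist ({z : ℂ | 0 < z.im} \ {Complex.I}) (f (t : ℂ)) (f (-(t : ℂ))) =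
          2 * jdist (Metric.ball (0 : ℂ) 1 \ {0}) (t : ℂ) (-(t : ℂ)) := by
  constructor
  · intro x hx y hy
    have hx1 : ‖x‖ < 1 := by
      have := hx.1; simpa [Metric.mem_ball, Complex.dist_eq] using this
    have hx0 : x ≠ 0 := by simpa using hx.2
    have hy1 : ‖y‖ < 1 := by
      have := hy.1; simpa [Metric.mem_ball, Complex.dist_eq] using this
    have hy0 : y ≠ 0 := by simpa using hy.2
    have ha0 : (0:ℝ) < ‖x‖ := by simpa [norm_pos_iff] using hx0
    have hb0 : (0:ℝ) < ‖y‖ := by simpa [norm_pos_iff] using hy0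
    have hp0 : (0:ℝ) < ‖1 - x‖ := by
      simpa [norm_pos_iff] using one_sub_ne hx1
    have hq0 : (0:ℝ) < ‖1 - y‖ := by
      simpa [norm_pos_iff] using one_sub_ne hy1
    rw [jdist, jdist, infDist_disk hx1 hx0, infDist_disk hy1 hy0, hf x, hf y,
      infDist_half (im_f_pos hx1), infDist_half (im_f_pos hy1),
      im_f hx1, im_f hy1, abs_f_sub_I hx1, abs_f_sub_I hy1, abs_f_sub hx1 hy1,
      Complex.dist_eq x y]
    have hpa : ‖1 - x‖ ≤ 1 + ‖x‖ := by
      simpa using norm_sub_le (1:ℂ) x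
    have hap : 1 - ‖x‖ ≤ ‖1 - x‖ := by
      simpa using norm_sub_norm_le (1:ℂ) x
    have hqb : ‖1 - y‖ ≤ 1 + ‖y‖ := by
      simpa using norm_sub_le (1:ℂ) y
    have hbq : 1 - ‖y‖ ≤ ‖1 - y‖ := by
      simpa using norm_sub_norm_le (1:ℂ) y
    have hspq : ‖1 - x‖ - ‖1 - y‖ ≤ ‖x - y‖ := by
      calc ‖1 - x‖ - ‖1 - y‖ ≤ ‖(1-x) - (1-y)‖ := by
            simpa using norm_sub_norm_le (1-x) (1-y)
        _ = ‖x - y‖ := by rw [show (1-x) - (1-y) = -(x - y) by ring, norm_neg]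
    have hsqp : ‖1 - y‖ - ‖1 - x‖ ≤ ‖x - y‖ := by
      calc ‖1 - y‖ - ‖1 - x‖ ≤ ‖(1-y) - (1-x)‖ := by
            simpa using norm_sub_norm_le (1-y) (1-x)
        _ = ‖x - y‖ := by rw [show (1-y) - (1-x) = x - y by ring]
    have := realmain (a := ‖x‖) (b := ‖y‖)
      (p := ‖1-x‖) (q := ‖1-y‖) (s := ‖x-y‖)
      ha0 hx1 hb0 hy1 hp0 hpa hap hq0 hqb hbq (norm_nonneg _) hspq hsqp
    exact this
  · intro t ht1 ht2
    have ht0 : (0:ℝ) < t := by linarith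
    have habs_t : ‖(t:ℂ)‖ = t := by
      rw [Complex.norm_real, Real.norm_eq_abs]; exact abs_of_pos ht0
    have habs_mt : ‖-(t:ℂ)‖ = t := by rw [norm_neg]; exact habs_t
    have h1 : ‖(t:ℂ)‖ < 1 := by rw [habs_t]; exact ht2
    have h2 : ‖-(t:ℂ)‖ < 1 := by rw [habs_mt]; exact ht2
    have hne1 : (t:ℂ) ≠ 0 := Complex.ofReal_ne_zero.2 (ne_of_gt ht0)
    have hne2 : -(t:ℂ) ≠ 0 := by
      simp only [neg_ne_zero]; exact hne1
    have e1 : ‖1 - (t:ℂ)‖ = 1 - t := by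
      rw [show (1:ℂ) - (t:ℂ) = ((1-t:ℝ):ℂ) by push_cast; ring, Complex.norm_real, Real.norm_eq_abs,
        abs_of_pos (by linarith)]
    have e2 : ‖1 - (-(t:ℂ))‖ = 1 + t := by
      rw [show (1:ℂ) - (-(t:ℂ)) = ((1+t:ℝ):ℂ) by push_cast; ring, Complex.norm_real, Real.norm_eq_abs,
        abs_of_pos (by linarith)]
    have e3 : ‖(t:ℂ) - (-(t:ℂ))‖ = 2*t := by
      rw [show (t:ℂ) - (-(t:ℂ)) = ((2*t:ℝ):ℂ) by push_cast; ring, Complex.norm_real, Real.norm_eq_abs,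
        abs_of_pos (by linarith)]
    rw [jdist, jdist, infDist_disk h1 hne1, infDist_disk h2 hne2, hf, hf,
      infDist_half (im_f_pos h1), infDist_half (im_f_pos h2),
      im_f h1, im_f h2, abs_f_sub_I h1, abs_f_sub_I h2, abs_f_sub h1 h2,
      Complex.dist_eq, habs_t, habs_mt, e1, e2, e3]
    -- now a purely real goal
    have hd1 : min (1 - t) t = 1 - t := min_eq_left (by linarith)
    have ht1' : (0:ℝ) < 1 - t := by linarith
    have ht1p : (0:ℝ) < 1 + t := by linarith
    have f1 : (1 - t^2)/(1-t)^2 = (1+t)/(1-t) := by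
      rw [div_eq_div_iff (by positivity) (by positivity)]; ring
    have f2 : (1 - t^2)/(1+t)^2 = (1-t)/(1+t) := by
      rw [div_eq_div_iff (by positivity) (by positivity)]; ring
    have g1 : min ((1 - t^2)/(1-t)^2) (2*t/(1-t)) = 2*t/(1-t) := by
      rw [f1]
      exact min_eq_right (by rw [div_le_div_iff₀ ht1' ht1']; nlinarith)
    have g2 : min ((1 - t^2)/(1+t)^2) (2*t/(1+t)) = (1-t)/(1+t) := by
      rw [f2]
      exact min_eq_left (by rw [div_le_div_iff₀ ht1p ht1p]; nlinarith)
    rw [hd1, g1, g2, min_self]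
    have g3 : min (2*t/(1-t)) ((1-t)/(1+t)) = (1-t)/(1+t) := by
      apply min_eq_right
      rw [div_le_div_iff₀ ht1p ht1']
      nlinarith
    rw [g3]
    have harg : 1 + 2*(2*t)/((1-t)*(1+t)) / ((1-t)/(1+t)) = (1 + 2*t/(1-t))^2 := by
      field_simp
      ring
    rw [harg, Real.log_pow]
    norm_num
end

section
/- Let a ∈ ℍ², let α ∈ ℝ, and let f : ℍ² → 𝔻 be the Möbius transformation f(z) = e^{iα}(z − a)/(z − ā), which maps ℍ² onto 𝔻 with f(a) = 0. Then for all x, y ∈ ℍ²: (1/2) · j_{ℍ²}(x, y) ≤ j_𝔻(f(x), f(y)) ≤ 2 · j_{ℍ²}(x, y). -/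
open Metric Filter Topology Set

private lemma infDist_im' (x : ℂ) (hx : 0 ≤ x.im) :
    Metric.infDist x {z : ℂ | z.im = 0} = x.im := by
  apply le_antisymm
  · have h : (⟨x.re, 0⟩ : ℂ) ∈ {z : ℂ | z.im = 0} := rfl
    calc infDist x {z : ℂ | z.im = 0} ≤ dist x ⟨x.re, 0⟩ := infDist_le_dist_of_mem h
    _ = x.im := by
        rw [Complex.dist_eq]
        simp only [Complex.norm_def, Complex.normSq_apply, Complex.sub_re, Complex.sub_im]
        simp only [sub_self, mul_zero, zero_mul, sub_zero, add_zero, zero_add, mul_self_nonneg]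
        exact Real.sqrt_mul_self hx
  · by_contra hlt
    push_neg at hlt
    obtain ⟨z, hz, hdz⟩ :=
      (infDist_lt_iff (s := {z : ℂ | z.im = 0}) ⟨0, Complex.zero_im⟩).1 hlt
    have : x.im ≤ dist x z := by
      calc x.im = |(x - z).im| := by
            have hz' : z.im = 0 := hz
            rw [Complex.sub_im, hz', sub_zero, abs_of_nonneg hx]
      _ ≤ ‖x - z‖ := Complex.abs_im_le_norm _
      _ = dist x z := (Complex.dist_eq x z).symm
    linarith

private lemma infDist_sphere' (w : ℂ) (hw : ‖w‖ ≤ 1) :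
    Metric.infDist w (Metric.sphere (0:ℂ) 1) = 1 - ‖w‖ := by
  apply le_antisymm
  · rcases eq_or_ne w 0 with h0 | h0
    · subst h0
      have h : (1 : ℂ) ∈ Metric.sphere (0:ℂ) 1 := by simp
      calc infDist 0 (sphere (0:ℂ) 1) ≤ dist (0:ℂ) 1 := infDist_le_dist_of_mem h
      _ = 1 - ‖(0:ℂ)‖ := by simp
    · have hne : ‖w‖ ≠ 0 := by simpa using h0
      have h : (w / ‖w‖ : ℂ) ∈ Metric.sphere (0:ℂ) 1 := by
        simp only [mem_sphere_iff_norm, sub_zero, norm_div,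
          Complex.norm_real, Real.norm_eq_abs, abs_of_nonneg (norm_nonneg w)]
        exact div_self hne
      calc infDist w (sphere (0:ℂ) 1) ≤ dist w (w / ‖w‖) := infDist_le_dist_of_mem h
      _ = 1 - ‖w‖ := by
          rw [Complex.dist_eq]
          have he : w - w / ‖w‖ = w * (1 - 1/‖w‖) := by ring
          rw [he, norm_mul]
          have h1 : ‖(1 : ℂ) - 1/(‖w‖ : ℂ)‖ = 1/‖w‖ - 1 := by
            rw [show ((1:ℂ) - 1/(‖w‖:ℂ)) = (((1 - 1/‖w‖ : ℝ)):ℂ) by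
              push_cast; ring]
            rw [Complex.norm_real, Real.norm_eq_abs, abs_of_nonpos]
            · ring
            · have : (1:ℝ) ≤ 1 / ‖w‖ := by
                rw [le_div_iff₀ (by positivity)]; simpa using hw
              linarith
          rw [h1]
          field_simp
  · by_contra hlt
    push_neg at hlt
    obtain ⟨z, hz, hdz⟩ := (infDist_lt_iff ⟨1, by simp⟩).1 hlt
    rw [mem_sphere_iff_norm, sub_zero] at hz
    have : 1 - ‖w‖ ≤ dist w z := by
      rw [Complex.dist_eq]
      calc 1 - ‖w‖ = ‖z‖ - ‖w‖ := by rw [hz]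
      _ ≤ ‖z - w‖ := norm_sub_norm_le z w
      _ = ‖w - z‖ := norm_sub_rev z w
    linarith

private lemma le_of_sq_le_sq' {a b : ℝ} (h : a^2 ≤ b^2) (hb : 0 ≤ b) : a ≤ b := by
  nlinarith [h, hb]

private lemma auxH1 {m M s R : ℝ} (hm : 0 < m) (hMs : M ≤ m + s)
    (hR : 0 ≤ R) (hR2 : R^2 * (4*m*M) = s^2) :
    1 + s/m ≤ (R + Real.sqrt (1+R^2))^2 := by
  obtain ⟨w, hw⟩ : ∃ w, w = Real.sqrt (1+R^2) := ⟨_, rfl⟩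
  rw [← hw]
  have hw0 : 0 ≤ w := hw ▸ Real.sqrt_nonneg _
  have hw2 : w^2 = 1 + R^2 := hw ▸ Real.sq_sqrt (by positivity)
  have hkey : (s - 2*m*R^2)^2 ≤ (2*m*R*w)^2 := by
    have h4 : (2*m*R*w)^2 = 4*m^2*R^2*(1+R^2) := by
      rw [mul_pow, mul_pow, mul_pow, hw2]; ring
    rw [h4]
    nlinarith [hR2, mul_nonneg (mul_nonneg hm.le (sq_nonneg R))
      (show (0:ℝ) ≤ m + s - M by linarith)]
  have h5 : s - 2*m*R^2 ≤ 2*m*R*w := le_of_sq_le_sq' hkey (by positivity)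
  have h6 : m + s ≤ m*(R+w)^2 := by nlinarith [h5, hw2]
  calc 1 + s/m = (m+s)/m := by field_simp
  _ ≤ (R+w)^2 := by rw [div_le_iff₀ hm]; linarith [h6]

private lemma auxH2 {m M s R : ℝ} (hm : 0 < m) (hmM : m ≤ M) (hs : 0 ≤ s)
    (hR : 0 ≤ R) (hR2 : R^2 * (4*m*M) = s^2) :
    R + Real.sqrt (1+R^2) ≤ 1 + s/m := by
  obtain ⟨w, hw⟩ : ∃ w, w = Real.sqrt (1+R^2) := ⟨_, rfl⟩
  rw [← hw]
  have hw0 : 0 ≤ w := hw ▸ Real.sqrt_nonneg _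
  have hw2 : w^2 = 1 + R^2 := hw ▸ Real.sq_sqrt (by positivity)
  have hwR : w ≤ 1 + R := by nlinarith [hw2, hw0, hR]
  have h1 : (2*R*m)^2 ≤ s^2 := by nlinarith [hR2, hm, hmM, sq_nonneg R]
  have h2 : 2*R*m ≤ s := le_of_sq_le_sq' h1 hs
  have h3 : 2*R ≤ s/m := by rw [le_div_iff₀ hm]; linarith
  linarith

private lemma auxD1 {p q d R : ℝ} (hp : 0 < p) (hpq : p ≤ q) (hq1 : q ≤ 1) (hd : 0 ≤ d)
    (hqd : q ≤ p + d)
    (hR : 0 ≤ R) (hR2 : R^2 * (p*(2-p)*(q*(2-q))) = d^2) :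
    1 + d/p ≤ (R + Real.sqrt (1+R^2))^2 := by
  obtain ⟨w, hw⟩ : ∃ w, w = Real.sqrt (1+R^2) := ⟨_, rfl⟩
  rw [← hw]
  have hw0 : 0 ≤ w := hw ▸ Real.sqrt_nonneg _
  have hw2 : w^2 = 1 + R^2 := hw ▸ Real.sq_sqrt (by positivity)
  have hq0 : 0 < q := lt_of_lt_of_le hp hpq
  have hPQ : (2-p)*(q*(2-q)) ≤ 4*(p+d) := by
    have e1 : (2-p)*(q*(2-q)) ≤ 2*(q*(2-q)) := by
      nlinarith [mul_nonneg hq0.le (show (0:ℝ) ≤ 2-q by linarith), hp.le]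
    have e2 : q*(2-q) ≤ 2*q := by nlinarith [sq_nonneg q]
    linarith
  have hkey : (d - 2*p*R^2)^2 ≤ (2*p*R*w)^2 := by
    have h4 : (2*p*R*w)^2 = 4*p^2*R^2*(1+R^2) := by
      rw [mul_pow, mul_pow, mul_pow, hw2]; ring
    rw [h4]
    nlinarith [hR2, mul_nonneg (mul_nonneg hp.le (sq_nonneg R))
      (show (0:ℝ) ≤ 4*(p+d) - (2-p)*(q*(2-q)) by linarith)]
  have h5 : d - 2*p*R^2 ≤ 2*p*R*w := le_of_sq_le_sq' hkey (by positivity)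
  have h6 : p + d ≤ p*(R+w)^2 := by nlinarith [h5, hw2]
  calc 1 + d/p = (p+d)/p := by field_simp
  _ ≤ (R+w)^2 := by rw [div_le_iff₀ hp]; linarith [h6]

set_option maxHeartbeats 1000000 in
private lemma auxD2 {p q d R : ℝ} (hp : 0 < p) (hpq : p ≤ q) (hq1 : q ≤ 1) (hd : 0 ≤ d)
    (hd2 : d ≤ 2 - p - q)
    (hR : 0 ≤ R) (hR2 : R^2 * (p*(2-p)*(q*(2-q))) = d^2) :
    R + Real.sqrt (1+R^2) ≤ 1 + d/p := by
  obtain ⟨w, hw⟩ : ∃ w, w = Real.sqrt (1+R^2) := ⟨_, rfl⟩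
  rw [← hw]
  have hw0 : 0 ≤ w := hw ▸ Real.sqrt_nonneg _
  have hw2 : w^2 = 1 + R^2 := hw ▸ Real.sq_sqrt (by positivity)
  have hq0 : 0 < q := lt_of_lt_of_le hp hpq
  have hd2p : d + 2*p ≤ 2 := by linarith
  have h5 : 2*(p+d) ≤ (2-p)*(d+2*p) := by
    nlinarith [mul_nonneg hp.le (show (0:ℝ) ≤ 2 - d - 2*p by linarith)]
  have h6 : 4*(p+d)^2 ≤ (2-p)^2*(d+2*p)^2 := by
    nlinarith [h5, hp, hd, mul_nonneg hp.le hd]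
  have h7 : p*(2-p) ≤ q*(2-q) := by
    nlinarith [mul_nonneg (show (0:ℝ) ≤ q - p by linarith)
      (show (0:ℝ) ≤ 2 - p - q by linarith)]
  have h8 : 4*p*(p+d)^2 ≤ ((2-p)*(q*(2-q)))*(d+2*p)^2 := by
    have h8a : (2-p)*(p*(2-p))*(d+2*p)^2 ≤ (2-p)*(q*(2-q))*(d+2*p)^2 := by
      apply mul_le_mul_of_nonneg_right _ (sq_nonneg _)
      exact mul_le_mul_of_nonneg_left h7 (by linarith)
    have h8b : 4*p*(p+d)^2 ≤ (2-p)*(p*(2-p))*(d+2*p)^2 := by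
      nlinarith [mul_nonneg hp.le (sub_nonneg.2 h6)]
    linarith
  have h9 : (2*p*R*(p+d))^2 ≤ (d*(d+2*p))^2 := by
    have e3 : (2*p*R*(p+d))^2 = R^2*(4*p*(p+d)^2)*p := by ring
    have e4 : (d*(d+2*p))^2 = R^2*(((2-p)*(q*(2-q)))*(d+2*p)^2)*p := by
      rw [show (d*(d+2*p))^2 = d^2*(d+2*p)^2 from by ring, ← hR2]; ring
    rw [e3, e4]
    exact mul_le_mul_of_nonneg_right (mul_le_mul_of_nonneg_left h8 (sq_nonneg R)) hp.le
  have h10 : 2*p*R*(p+d) ≤ d*(d+2*p) :=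
    le_of_sq_le_sq' h9 (by positivity)
  have e5 : d*(d+2*p) ≤ 2*(p+d)^2 := by
    nlinarith [sq_nonneg d, sq_nonneg p, mul_nonneg hp.le hd]
  have hpd : (0:ℝ) < p + d := by linarith
  have e6 : (2*(p+d))*(p*R) ≤ (2*(p+d))*(p+d) := by nlinarith [h10, e5]
  have hge' : p*R ≤ p+d := le_of_mul_le_mul_left e6 (by linarith)
  have hge : 0 ≤ p + d - p*R := by linarith
  have hsq : (p*w)^2 ≤ (p+d-p*R)^2 := by
    have hpw : (p*w)^2 = p^2 + p^2*R^2 := by rw [mul_pow, hw2]; ring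
    rw [hpw]; nlinarith [h10]
  have h11 : p*w ≤ p+d-p*R := le_of_sq_le_sq' hsq hge
  have h12 : p*(R+w) ≤ p + d := by linarith
  calc R + w = (p*(R+w))/p := by field_simp
  _ ≤ (p+d)/p := by gcongr
  _ = 1 + d/p := by field_simp

set_option maxHeartbeats 2000000 in
/-- Any Möbius transformation `f(z) = e^{iα}(z-a)/(z-ā)` of the upper half
plane onto the unit disk with `f(a) = 0` is `2`-bilipschitz with respect to
the distance ratio metrics. -/
theorem mobius_halfplane_to_disk_jdist_bilipschitz (a : ℂ) (ha : 0 < a.im) (α : ℝ)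
    (f : ℂ → ℂ)
    (hf : ∀ z, f z = Complex.exp (α * Complex.I) * (z - a) / (z - (starRingEnd ℂ) a)) :
    ∀ x ∈ {z : ℂ | 0 < z.im}, ∀ y ∈ {z : ℂ | 0 < z.im},
      (1 / 2) * jdist {z : ℂ | 0 < z.im} x y ≤
          jdist (Metric.ball (0 : ℂ) 1) (f x) (f y) ∧
        jdist (Metric.ball (0 : ℂ) 1) (f x) (f y) ≤ 2 * jdist {z : ℂ | 0 < z.im} x y := by
  have hsq : ∀ w : ℂ, ‖w‖^2 = w.re^2 + w.im^2 := fun w => by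
    rw [Complex.sq_norm, Complex.normSq_apply]; ring
  have hne : ∀ z : ℂ, 0 < z.im → z - (starRingEnd ℂ) a ≠ 0 := by
    intro z hz h
    have h2 := congrArg Complex.im h
    simp only [Complex.sub_im, Complex.conj_im, Complex.zero_im, sub_neg_eq_add] at h2
    linarith
  have hI : ∀ z : ℂ, ‖z - (starRingEnd ℂ) a‖^2 = ‖z - a‖^2 + 4*z.im*a.im := by
    intro z
    rw [hsq, hsq]
    simp only [Complex.sub_re, Complex.sub_im, Complex.conj_re, Complex.conj_im]
    ring
  have hnorm : ∀ z : ℂ, 0 < z.im → ‖f z‖ * ‖z - (starRingEnd ℂ) a‖ = ‖z - a‖ := by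
    intro z hz
    have he : ‖Complex.exp ((α:ℂ)*Complex.I)‖ = 1 := by
      rw [Complex.norm_exp]; simp
    rw [hf z, norm_div, norm_mul, he, one_mul,
      div_mul_cancel₀ _ (norm_ne_zero_iff.mpr (hne z hz))]
  intro x hx y hy
  rw [Set.mem_setOf_eq] at hx hy
  -- abbreviations
  set u := ‖f x‖ with hu_def
  set v := ‖f y‖ with hv_def
  set s := ‖x - y‖ with hs_def
  set d := ‖f x - f y‖ with hd_def
  have hAx : (0:ℝ) < ‖x - (starRingEnd ℂ) a‖ := norm_pos_iff.mpr (hne x hx)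
  have hAy : (0:ℝ) < ‖y - (starRingEnd ℂ) a‖ := norm_pos_iff.mpr (hne y hy)
  have hu0 : 0 ≤ u := norm_nonneg _
  have hv0 : 0 ≤ v := norm_nonneg _
  have hs0 : 0 ≤ s := norm_nonneg _
  have hd0 : 0 ≤ d := norm_nonneg _
  -- (1-u²)·Ax² = 4·x.im·a.im and similarly for y
  have hu2 : (1-u^2) * ‖x - (starRingEnd ℂ) a‖^2 = 4*x.im*a.im := by
    have husq : u^2 * ‖x - (starRingEnd ℂ) a‖^2 = ‖x - a‖^2 := by
      rw [← mul_pow, hnorm x hx]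
    linear_combination hI x - husq
  have hv2 : (1-v^2) * ‖y - (starRingEnd ℂ) a‖^2 = 4*y.im*a.im := by
    have hvsq : v^2 * ‖y - (starRingEnd ℂ) a‖^2 = ‖y - a‖^2 := by
      rw [← mul_pow, hnorm y hy]
    linear_combination hI y - hvsq
  have hxa : (0:ℝ) < 4*x.im*a.im := by have := mul_pos hx ha; linarith
  have hya : (0:ℝ) < 4*y.im*a.im := by have := mul_pos hy ha; linarith
  have hu1' : 0 < 1 - u^2 := by
    rcases lt_or_ge 0 (1 - u^2) with h|h
    · exact h
    · exfalso
      have h2 : (1-u^2) * ‖x - (starRingEnd ℂ) a‖^2 ≤ 0 :=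
        mul_nonpos_of_nonpos_of_nonneg h (sq_nonneg _)
      linarith
  have hv1' : 0 < 1 - v^2 := by
    rcases lt_or_ge 0 (1 - v^2) with h|h
    · exact h
    · exfalso
      have h2 : (1-v^2) * ‖y - (starRingEnd ℂ) a‖^2 ≤ 0 :=
        mul_nonpos_of_nonpos_of_nonneg h (sq_nonneg _)
      linarith
  have hu1 : u < 1 := by
    by_contra hcon; push_neg at hcon
    have h2 : 1*1 ≤ u*u := mul_le_mul hcon hcon (by linarith) (by linarith)
    linarith
  have hv1 : v < 1 := by
    by_contra hcon; push_neg at hcon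
    have h2 : 1*1 ≤ v*v := mul_le_mul hcon hcon (by linarith) (by linarith)
    linarith
  -- the difference identity
  have hdiff : (f x - f y) * ((x - (starRingEnd ℂ) a)*(y - (starRingEnd ℂ) a)) =
      Complex.exp ((α:ℂ)*Complex.I) * (((starRingEnd ℂ) a - a) * (y - x)) := by
    rw [hf x, hf y]
    field_simp [hne x hx, hne y hy]
    ring
  have hconj : ‖(starRingEnd ℂ) a - a‖ = 2*a.im := by
    have h1 : (starRingEnd ℂ) a - a = Complex.I * ((-2*a.im : ℝ) : ℂ) := by
      apply Complex.ext
      · simp [Complex.sub_re, Complex.conj_re, Complex.mul_re]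
      · simp [Complex.sub_im, Complex.conj_im, Complex.mul_im]
        ring
    rw [h1, norm_mul, Complex.norm_I, one_mul, Complex.norm_real]
    rw [Real.norm_eq_abs, abs_of_nonpos (by linarith)]
    ring
  have hd_eq : d * (‖x - (starRingEnd ℂ) a‖ * ‖y - (starRingEnd ℂ) a‖) = 2*a.im*s := by
    have hthis := congrArg norm hdiff
    have he : ‖Complex.exp ((α:ℂ)*Complex.I)‖ = 1 := by
      rw [Complex.norm_exp]; simp
    have h5 : ‖y - x‖ = s := by rw [hs_def, norm_sub_rev]
    rw [norm_mul, norm_mul, norm_mul, he, one_mul, norm_mul, hconj, h5] at hthis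
    exact hthis
  -- master identity
  have master : d^2*(4*(x.im*y.im)) = s^2*((1-u^2)*(1-v^2)) := by
    have hmaster' : d^2*(4*(x.im*y.im))*(‖x - (starRingEnd ℂ) a‖^2*‖y - (starRingEnd ℂ) a‖^2) =
        s^2*((1-u^2)*(1-v^2))*(‖x - (starRingEnd ℂ) a‖^2*‖y - (starRingEnd ℂ) a‖^2) := by
      linear_combination
        (4*(x.im*y.im)*(d*(‖x - (starRingEnd ℂ) a‖*‖y - (starRingEnd ℂ) a‖) + 2*a.im*s)) * hd_eq
        - s^2*((1-v^2)*‖y - (starRingEnd ℂ) a‖^2) * hu2 - s^2*(4*x.im*a.im) * hv2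
    have hAA : (0:ℝ) < ‖x - (starRingEnd ℂ) a‖^2*‖y - (starRingEnd ℂ) a‖^2 := by positivity
    exact mul_right_cancel₀ (ne_of_gt hAA) hmaster'
  -- min/max setup
  set m := min x.im y.im with hm_def
  set Mv := max x.im y.im with hM_def
  set p := min (1-u) (1-v) with hp_def
  set q := max (1-u) (1-v) with hq_def
  have hm0 : 0 < m := lt_min hx hy
  have hmM : m ≤ Mv := min_le_max
  have hM0 : 0 < Mv := lt_of_lt_of_le hm0 hmM
  have hp0 : 0 < p := lt_min (by linarith) (by linarith)
  have hpq : p ≤ q := min_le_max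
  have hq1 : q ≤ 1 := max_le (by linarith) (by linarith)
  have hMs : Mv ≤ m + s := by
    have h1 : Mv - m = |x.im - y.im| := by
      rw [hM_def, hm_def, max_sub_min_eq_abs, abs_sub_comm]
    have h2 : |x.im - y.im| ≤ s := by
      calc |x.im - y.im| = |(x-y).im| := by rw [Complex.sub_im]
      _ ≤ ‖x - y‖ := Complex.abs_im_le_norm _
      _ = s := hs_def.symm
    linarith
  have hqd : q ≤ p + d := by
    have h1 : q - p = |(1-u) - (1-v)| := by
      rw [hq_def, hp_def, max_sub_min_eq_abs, abs_sub_comm]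
    have h2 : |(1-u) - (1-v)| = |v - u| := by congr 1; ring
    have h3 : |v - u| ≤ d := by
      calc |v - u| = |‖f y‖ - ‖f x‖| := rfl
      _ ≤ ‖f y - f x‖ := abs_norm_sub_norm_le _ _
      _ = d := by rw [hd_def, norm_sub_rev]
    linarith
  have hd2 : d ≤ 2 - p - q := by
    have h1 : p + q = (1-u) + (1-v) := min_add_max _ _
    have h2 : d ≤ u + v := norm_sub_le _ _
    linarith
  -- the invariant R
  obtain ⟨R, hR_def⟩ : ∃ R, R = Real.sqrt (s^2/(4*(m*Mv))) := ⟨_, rfl⟩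
  have hR0 : 0 ≤ R := hR_def ▸ Real.sqrt_nonneg _
  have hR2 : R^2 = s^2/(4*(m*Mv)) :=
    hR_def ▸ Real.sq_sqrt (div_nonneg (sq_nonneg _) (by positivity))
  have hR2H : R^2 * (4*m*Mv) = s^2 := by
    rw [hR2, div_mul_eq_mul_div, div_eq_iff (by positivity : (4:ℝ)*(m*Mv) ≠ 0)]
    ring
  have hmmv : m * Mv = x.im * y.im := min_mul_max _ _
  have hpq_prod : p*(2-p)*(q*(2-q)) = ((1-u)*(1+u))*((1-v)*(1+v)) := by
    rcases le_total (1-u) (1-v) with h|h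
    · rw [hp_def, hq_def, min_eq_left h, max_eq_right h]; ring
    · rw [hp_def, hq_def, min_eq_right h, max_eq_left h]; ring
  have hR2D : R^2 * (p*(2-p)*(q*(2-q))) = d^2 := by
    rw [hpq_prod, hR2, hmmv]
    rw [div_mul_eq_mul_div, div_eq_iff (by positivity : (4:ℝ)*(x.im*y.im) ≠ 0)]
    linear_combination -master
  -- jdist formulas
  have hjH : jdist {z:ℂ | 0 < z.im} x y = Real.log (1 + s/m) := by
    unfold jdist
    rw [Complex.frontier_setOf_lt_im 0, infDist_im' x hx.le, infDist_im' y hy.le,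
      dist_eq_norm]
  have hjD : jdist (Metric.ball (0:ℂ) 1) (f x) (f y) = Real.log (1 + d/p) := by
    unfold jdist
    rw [frontier_ball (0:ℂ) one_ne_zero, infDist_sphere' _ hu1.le, infDist_sphere' _ hv1.le,
      dist_eq_norm]
  clear_value u v s d m Mv p q
  -- assemble via log
  have hc1 : 1 ≤ R + Real.sqrt (1+R^2) := by
    have h1 : (1:ℝ) ≤ Real.sqrt (1+R^2) := by
      have h2 := Real.sqrt_le_sqrt (show (1:ℝ) ≤ 1+R^2 by linarith [sq_nonneg R])
      rwa [Real.sqrt_one] at h2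
    linarith
  have hsm0 : 0 ≤ s/m := div_nonneg hs0 hm0.le
  have hdp0 : 0 ≤ d/p := div_nonneg hd0 hp0.le
  have lH1 : Real.log (1+s/m) ≤ 2*Real.log (R + Real.sqrt (1+R^2)) := by
    calc Real.log (1+s/m) ≤ Real.log ((R + Real.sqrt (1+R^2))^2) := by
          apply (Real.log_le_log_iff (by linarith) (by positivity)).mpr
          exact auxH1 hm0 hMs hR0 hR2H
    _ = 2*Real.log (R + Real.sqrt (1+R^2)) := by
        rw [Real.log_pow]; push_cast; ring
  have lH2 : Real.log (R + Real.sqrt (1+R^2)) ≤ Real.log (1+s/m) :=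
    (Real.log_le_log_iff (by linarith) (by linarith)).mpr (auxH2 hm0 hmM hs0 hR0 hR2H)
  have lD1 : Real.log (1+d/p) ≤ 2*Real.log (R + Real.sqrt (1+R^2)) := by
    calc Real.log (1+d/p) ≤ Real.log ((R + Real.sqrt (1+R^2))^2) := by
          apply (Real.log_le_log_iff (by linarith) (by positivity)).mpr
          exact auxD1 hp0 hpq hq1 hd0 hqd hR0 hR2D
    _ = 2*Real.log (R + Real.sqrt (1+R^2)) := by
        rw [Real.log_pow]; push_cast; ring
  have lD2 : Real.log (R + Real.sqrt (1+R^2)) ≤ Real.log (1+d/p) :=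
    (Real.log_le_log_iff (by linarith) (by linarith)).mpr (auxD2 hp0 hpq hq1 hd0 hd2 hR0 hR2D)
  rw [hjH, hjD]
  constructor <;> linarith
end

section
/- Let a ∈ ℍ², let α ∈ ℝ, and let f(z) = e^{iα}(z − a)/(z − ā), which maps ℍ² \ {a} onto 𝔻 \ {0} with f(a) = 0. Then for all x, y ∈ ℍ² \ {a}: (1/2) · j_{ℍ²∖{a}}(x, y) ≤ j_{𝔻∖{0}}(f(x), f(y)) ≤ 2 · j_{ℍ²∖{a}}(x, y). -/
open Metric Filter Topology Set

namespace MobiusJdistAux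

lemma le_infDist_of_forall {s : Set ℂ} {x : ℂ} {c : ℝ} (hs : s.Nonempty)
    (h : ∀ y ∈ s, c ≤ dist x y) : c ≤ Metric.infDist x s := by
  by_contra hlt
  push_neg at hlt
  obtain ⟨y, hy, hd⟩ := (Metric.infDist_lt_iff hs).1 hlt
  exact absurd (h y hy) (not_le.2 hd)

lemma closure_punct {U : Set ℂ} (hU : IsOpen U) {b : ℂ} (hb : b ∈ U) :
    closure (U \ {b}) = closure U := by
  refine Subset.antisymm (closure_mono diff_subset) ?_
  have hb' : b ∈ closure (U \ {b}) := by
    rw [mem_closure_iff_nhdsWithin_neBot, diff_eq,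
      nhdsWithin_inter_of_mem (mem_nhdsWithin_of_mem_nhds (hU.mem_nhds hb))]
    exact NormedField.nhdsNE_neBot b
  refine closure_minimal (fun z hz => ?_) isClosed_closure
  by_cases hzb : z = b
  · exact hzb ▸ hb'
  · exact subset_closure ⟨hz, hzb⟩

lemma frontierH {a : ℂ} (ha : 0 < a.im) :
    frontier ({z : ℂ | 0 < z.im} \ {a}) = {z : ℂ | z.im = 0} ∪ {a} := by
  have hop : IsOpen ({z : ℂ | 0 < z.im} \ {a}) :=
    (isOpen_lt continuous_const Complex.continuous_im).sdiff isClosed_singleton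
  have hcl : closure ({z : ℂ | 0 < z.im} \ {a}) = {z : ℂ | 0 ≤ z.im} := by
    rw [closure_punct (isOpen_lt continuous_const Complex.continuous_im)
      (show a ∈ {z : ℂ | 0 < z.im} from ha), Complex.closure_setOf_lt_im]
  rw [frontier, hop.interior_eq, hcl]
  ext z
  simp only [mem_diff, mem_union, mem_setOf_eq, mem_singleton_iff]
  constructor
  · rintro ⟨h0, h1⟩
    by_cases hz : z = a
    · exact Or.inr hz
    · left
      by_contra h2
      exact h1 ⟨lt_of_le_of_ne h0 (Ne.symm h2), hz⟩
  · rintro (h | rfl)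
    · exact ⟨le_of_eq h.symm, fun hc => by simp [h] at hc⟩
    · exact ⟨ha.le, fun hc => hc.2 rfl⟩

lemma frontierD : frontier (Metric.ball (0:ℂ) 1 \ {0}) = Metric.sphere (0:ℂ) 1 ∪ {0} := by
  have hop : IsOpen (Metric.ball (0:ℂ) 1 \ {0}) := isOpen_ball.sdiff isClosed_singleton
  have hcl : closure (Metric.ball (0:ℂ) 1 \ {0}) = Metric.closedBall (0:ℂ) 1 := by
    rw [closure_punct isOpen_ball (mem_ball_self one_pos), closure_ball (0:ℂ) one_ne_zero]
  rw [frontier, hop.interior_eq, hcl]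
  ext z
  simp only [mem_diff, mem_union, Metric.mem_closedBall, Metric.mem_ball, Metric.mem_sphere,
    mem_singleton_iff, not_and, not_not]
  constructor
  · rintro ⟨h0, h1⟩
    rcases eq_or_lt_of_le h0 with h | h
    · exact Or.inl h
    · exact Or.inr (h1 h)
  · rintro (h | rfl)
    · exact ⟨h.le, fun hlt => absurd h (ne_of_lt hlt)⟩
    · exact ⟨by simp, fun _ => rfl⟩

lemma sub_conj_ne {a z : ℂ} (ha : 0 < a.im) (hz : 0 ≤ z.im) : z - (starRingEnd ℂ) a ≠ 0 := by
  intro h0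
  have h1 : (z - (starRingEnd ℂ) a).im = 0 := by rw [h0]; simp
  rw [Complex.sub_im, Complex.conj_im] at h1; linarith

lemma abs_a_sub_conj {a : ℂ} (ha : 0 < a.im) :
    ‖a - (starRingEnd ℂ) a‖ = 2 * a.im := by
  rw [Complex.sub_conj, norm_mul, Complex.norm_real, Real.norm_eq_abs, Complex.norm_I, abs_of_pos (by linarith),
    mul_one]

lemma im_add_le_abs {a z : ℂ} (ha : 0 < a.im) (hz : 0 ≤ z.im) :
    z.im + a.im ≤ ‖z - (starRingEnd ℂ) a‖ := by
  have h := Complex.abs_im_le_norm (z - (starRingEnd ℂ) a)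
  rw [Complex.sub_im, Complex.conj_im] at h
  calc z.im + a.im = |z.im - -a.im| := by rw [abs_of_nonneg (by linarith)]; ring
  _ ≤ _ := h

lemma abs_sub_conj_le {a z : ℂ} (ha : 0 < a.im) :
    ‖z - (starRingEnd ℂ) a‖ ≤ ‖z - a‖ + 2 * a.im := by
  calc ‖z - (starRingEnd ℂ) a‖
      = ‖(z - a) + (a - (starRingEnd ℂ) a)‖ := by ring_nf
  _ ≤ ‖z - a‖ + ‖a - (starRingEnd ℂ) a‖ := norm_add_le _ _
  _ = ‖z - a‖ + 2 * a.im := by rw [abs_a_sub_conj ha]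

lemma sq_abs_conj (a z : ℂ) :
    ‖z - (starRingEnd ℂ) a‖ ^ 2 = ‖z - a‖ ^ 2 + 4 * a.im * z.im := by
  rw [Complex.sq_norm, Complex.sq_norm, Complex.normSq_apply, Complex.normSq_apply]
  simp only [Complex.sub_re, Complex.sub_im, Complex.conj_re, Complex.conj_im]
  ring

section FIdent

variable {a : ℂ} (ha : 0 < a.im) {α : ℝ} {f : ℂ → ℂ}
  (hf : ∀ z, f z = Complex.exp (α * Complex.I) * (z - a) / (z - (starRingEnd ℂ) a))

include ha hf

lemma dist_f_eq {z w : ℂ} (hz : 0 ≤ z.im) (hw : 0 ≤ w.im) :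
    dist (f z) (f w) *
      (‖z - (starRingEnd ℂ) a‖ * ‖w - (starRingEnd ℂ) a‖)
      = 2 * a.im * dist z w := by
  have hz0 := sub_conj_ne ha hz
  have hw0 := sub_conj_ne ha hw
  have key : f z - f w = Complex.exp (α * Complex.I) * (a - (starRingEnd ℂ) a) * (z - w) /
      ((z - (starRingEnd ℂ) a) * (w - (starRingEnd ℂ) a)) := by
    rw [hf z, hf w]; field_simp; ring
  rw [Complex.dist_eq, Complex.dist_eq, key, norm_div, norm_mul, norm_mul, norm_mul,
    Complex.norm_exp_ofReal_mul_I, abs_a_sub_conj ha, one_mul]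
  have h1 : ‖z - (starRingEnd ℂ) a‖ ≠ 0 := norm_ne_zero_iff.mpr hz0
  have h2 : ‖w - (starRingEnd ℂ) a‖ ≠ 0 := norm_ne_zero_iff.mpr hw0
  field_simp

lemma dist_f_exp {z : ℂ} (hz : 0 ≤ z.im) :
    dist (f z) (Complex.exp (α * Complex.I)) * ‖z - (starRingEnd ℂ) a‖
      = 2 * a.im := by
  have hz0 := sub_conj_ne ha hz
  have key : f z - Complex.exp (α * Complex.I)
      = Complex.exp (α * Complex.I) * (-(a - (starRingEnd ℂ) a)) / (z - (starRingEnd ℂ) a) := by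
    rw [hf z]; field_simp; ring
  rw [Complex.dist_eq, key, norm_div, norm_mul, norm_neg, Complex.norm_exp_ofReal_mul_I,
    abs_a_sub_conj ha, one_mul]
  rw [div_mul_cancel₀ _ (norm_ne_zero_iff.mpr hz0)]

lemma normf_eq {z : ℂ} (hz : 0 ≤ z.im) :
    ‖f z‖ * ‖z - (starRingEnd ℂ) a‖ = ‖z - a‖ := by
  rw [hf z, norm_div, norm_mul, Complex.norm_exp_ofReal_mul_I, one_mul,
    div_mul_cancel₀ _ (norm_ne_zero_iff.mpr (sub_conj_ne ha hz))]

omit ha in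
lemma f_a_eq : f a = 0 := by
  rw [hf a]; simp

lemma f_real_sphere {r : ℝ} : f (r:ℂ) ∈ Metric.sphere (0:ℂ) 1 := by
  have h1 : ‖(r:ℂ) - a‖ = ‖(r:ℂ) - (starRingEnd ℂ) a‖ := by
    rw [show ((r:ℂ) - (starRingEnd ℂ) a) = (starRingEnd ℂ) ((r:ℂ) - a) by
      rw [map_sub, Complex.conj_ofReal], Complex.norm_conj]
  have h2 := normf_eq ha hf (z := (r:ℂ)) (by simp)
  have h3 : ‖(r:ℂ) - (starRingEnd ℂ) a‖ ≠ 0 :=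
    norm_ne_zero_iff.mpr (sub_conj_ne ha (by simp))
  rw [Metric.mem_sphere, Complex.dist_eq, sub_zero]
  rw [h1] at h2
  field_simp at h2
  exact h2

omit ha hf in
lemma exp_sphere : Complex.exp (α * Complex.I) ∈ Metric.sphere (0:ℂ) 1 := by
  rw [Metric.mem_sphere, Complex.dist_eq, sub_zero, Complex.norm_exp_ofReal_mul_I]

end FIdent

lemma sqrt_le_aux {q B c : ℝ} (hq : 0 ≤ q) (hB : 0 ≤ B) (hc : 0 ≤ c) (h : B ^ 2 = q ^ 2 + c) :
    q ≤ B := by nlinarith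

lemma crossHelper {t t' m' r P Q C : ℝ} (hm' : 0 < m') (hP : m' ≤ P) (hQ : m' ≤ Q)
    (hC : 0 < C) (hr : 0 ≤ r) (ht : 0 ≤ t) (ht'0 : 0 ≤ t')
    (hid : t * (P * Q) = t' * C * r) (htri : C ≤ P + t' + Q) :
    t * m' ^ 2 ≤ (2 * t' * m' + t' ^ 2) * r := by
  have hP0 : 0 < P := lt_of_lt_of_le hm' hP
  have hQ0 : 0 < Q := lt_of_lt_of_le hm' hQ
  have e0 : m' ^ 2 * C ≤ m' ^ 2 * (P + t' + Q) := mul_le_mul_of_nonneg_left htri (by positivity)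
  have e1 : 0 ≤ m' * P * (Q - m') := mul_nonneg (mul_nonneg hm'.le hP0.le) (by linarith)
  have e2 : 0 ≤ m' * Q * (P - m') := mul_nonneg (mul_nonneg hm'.le hQ0.le) (by linarith)
  have e3 : 0 ≤ (P * Q - m' ^ 2) * t' := by
    apply mul_nonneg _ ht'0
    nlinarith
  have h1 : m' ^ 2 * C ≤ P * Q * (2 * m' + t') := by nlinarith [e0, e1, e2, e3]
  have h2 : t * (m' ^ 2 * C) ≤ t * (P * Q * (2 * m' + t')) := mul_le_mul_of_nonneg_left h1 ht
  have h3 : t * (P * Q * (2 * m' + t')) = ((2 * t' * m' + t' ^ 2) * r) * C := by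
    calc t * (P * Q * (2 * m' + t')) = (t * (P * Q)) * (2 * m' + t') := by ring
    _ = (t' * C * r) * (2 * m' + t') := by rw [hid]
    _ = ((2 * t' * m' + t' ^ 2) * r) * C := by ring
  have h4 : (t * m' ^ 2) * C ≤ ((2 * t' * m' + t' ^ 2) * r) * C := by
    calc (t * m' ^ 2) * C = t * (m' ^ 2 * C) := by ring
    _ ≤ _ := h2.trans_eq h3
  exact le_of_mul_le_mul_right h4 hC

lemma logstep {t t' m m' : ℝ} (hm : 0 < m) (hm' : 0 < m') (ht' : 0 ≤ t')
    (key : t' * m ^ 2 ≤ (2 * t * m + t ^ 2) * m') :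
    Real.log (1 + t' / m') ≤ 2 * Real.log (1 + t / m) := by
  have h1 : t' / m' ≤ (2 * t * m + t ^ 2) / m ^ 2 := by
    rw [div_le_div_iff₀ hm' (by positivity)]; linarith
  have h2 : (1 + t / m) ^ 2 = 1 + (2 * t * m + t ^ 2) / m ^ 2 := by field_simp; ring
  have h3 : Real.log ((1 + t / m) ^ 2) = 2 * Real.log (1 + t / m) := by
    rw [Real.log_pow]; push_cast; ring
  rw [← h3]
  have h5 : (0:ℝ) ≤ t' / m' := div_nonneg ht' hm'.le
  apply Real.log_le_log (by linarith)
  rw [h2]; linarith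

lemma lowH {a x : ℂ} (hx : 0 < x.im) :
    min x.im (dist x a) ≤ Metric.infDist x ({z : ℂ | z.im = 0} ∪ {a}) := by
  apply le_infDist_of_forall ⟨a, Or.inr rfl⟩
  rintro w (hw | hw)
  · have h1 := Complex.abs_im_le_norm (x - w)
    rw [Complex.sub_im, (show w.im = 0 from hw), sub_zero, abs_of_pos hx] at h1
    calc min x.im (dist x a) ≤ x.im := min_le_left _ _
    _ ≤ dist x w := by rw [Complex.dist_eq]; exact h1
  · rw [(show w = a from hw)]
    exact min_le_right _ _

lemma lowD (w : ℂ) :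
    min (‖w‖) (1 - ‖w‖) ≤
      Metric.infDist w (Metric.sphere (0:ℂ) 1 ∪ {0}) := by
  apply le_infDist_of_forall ⟨0, Or.inr rfl⟩
  rintro z (hz | hz)
  · have h1 : dist z (0:ℂ) = 1 := Metric.mem_sphere.1 hz
    have h2 : dist z 0 ≤ dist z w + dist w 0 := dist_triangle _ _ _
    have h3 : dist w (0:ℂ) = ‖w‖ := by rw [Complex.dist_eq, sub_zero]
    calc min (‖w‖) (1 - ‖w‖) ≤ 1 - ‖w‖ := min_le_right _ _
    _ ≤ dist z w := by rw [h3] at h2; linarith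
    _ = dist w z := dist_comm _ _
  · rw [(show z = (0:ℂ) from hz)]
    calc min (‖w‖) (1 - ‖w‖) ≤ ‖w‖ := min_le_left _ _
    _ = dist w 0 := by rw [Complex.dist_eq, sub_zero]

section Main

variable {a : ℂ} (ha : 0 < a.im) {α : ℝ} {f : ℂ → ℂ}
  (hf : ∀ z, f z = Complex.exp (α * Complex.I) * (z - a) / (z - (starRingEnd ℂ) a))

include ha hf

lemma normf_lt_one {x : ℂ} (hx : 0 < x.im) (hxa : x ≠ a) :
    0 < ‖f x‖ ∧ ‖f x‖ < 1 := by
  have hA0 : 0 < ‖x - (starRingEnd ℂ) a‖ :=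
    norm_pos_iff.mpr (sub_conj_ne ha hx.le)
  have hp0 : 0 < ‖x - a‖ := norm_pos_iff.mpr (sub_ne_zero.2 hxa)
  have hn := normf_eq ha hf hx.le
  have hsq := sq_abs_conj a x
  have hpA : ‖x - a‖ < ‖x - (starRingEnd ℂ) a‖ := by
    nlinarith [norm_nonneg (x - a), norm_nonneg (x - (starRingEnd ℂ) a),
      mul_pos ha hx]
  constructor
  · nlinarith
  · nlinarith

lemma onePoint1 {x y : ℂ} (hx : 0 < x.im) (hy : 0 < y.im) (hxa : x ≠ a) (hya : y ≠ a)
    {m : ℝ} (hm0 : 0 < m) (hmu : m ≤ x.im) (hmp : m ≤ dist x a)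
    (hmv : m ≤ y.im) (hmq : m ≤ dist y a) :
    dist (f x) (f y) * m ^ 2 ≤
      (2 * dist x y * m + dist x y ^ 2) *
        Metric.infDist (f x) (Metric.sphere (0:ℂ) 1 ∪ {0}) := by
  set A := ‖x - (starRingEnd ℂ) a‖ with hA
  set B := ‖y - (starRingEnd ℂ) a‖ with hB
  have hpabs : dist x a = ‖x - a‖ := Complex.dist_eq x a
  have hqabs : dist y a = ‖y - a‖ := Complex.dist_eq y a
  set p := dist x a with hp
  set q := dist y a with hq
  set u := x.im
  set v := y.im
  set h := a.im
  set t := dist x y with htt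
  set t' := dist (f x) (f y) with ht't
  have hh : 0 < h := ha
  have hu : 0 < u := hx
  have hv : 0 < v := hy
  have hAl : u + h ≤ A := im_add_le_abs ha hx.le
  have hBl : v + h ≤ B := im_add_le_abs ha hy.le
  have hA0 : 0 < A := by linarith
  have hB0 : 0 < B := by linarith
  have hA2 : A ^ 2 = p ^ 2 + 4 * h * u := by rw [hpabs]; exact sq_abs_conj a x
  have hB2 : B ^ 2 = q ^ 2 + 4 * h * v := by rw [hqabs]; exact sq_abs_conj a y
  have hAub : A ≤ p + 2 * h := by rw [hpabs]; exact abs_sub_conj_le ha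
  have hq0 : 0 ≤ q := dist_nonneg
  have hqB : q ≤ B := sqrt_le_aux hq0 hB0.le (by positivity) hB2
  have hhB : h ≤ B := by linarith
  have hvB : v ≤ B := by linarith
  have ht' : t' * (A * B) = 2 * h * t := by
    rw [htt, ht't]
    exact dist_f_eq ha hf hx.le hy.le
  have hptq : p ≤ t + q := dist_triangle x y a
  have hp0 : 0 < p := dist_pos.2 hxa
  have ht0 : 0 ≤ t := dist_nonneg
  have ht'0 : 0 ≤ t' := dist_nonneg
  set nfx := ‖f x‖ with hnfx
  have hnx : nfx * A = p := by rw [hpabs]; exact normf_eq ha hf hx.le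
  have hK : (0:ℝ) ≤ 2 * t * m + t ^ 2 := by positivity
  have hmB : m ≤ B := by linarith
  have hmain : t' * m ^ 2 ≤ (2 * t * m + t ^ 2) * min nfx (1 - nfx) := by
    rcases le_total nfx (1 - nfx) with hc | hc
    · rw [min_eq_left hc]
      apply le_of_mul_le_mul_right _ (mul_pos hA0 hB0)
      have hr : (2 * t * m + t ^ 2) * nfx * (A * B) = (2 * t * m + t ^ 2) * p * B := by
        calc (2 * t * m + t ^ 2) * nfx * (A * B) = (2 * t * m + t ^ 2) * (nfx * A) * B := by ring
        _ = (2 * t * m + t ^ 2) * p * B := by rw [hnx]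
      rw [hr]
      have hl : t' * m ^ 2 * (A * B) = 2 * h * t * m ^ 2 := by
        calc t' * m ^ 2 * (A * B) = (t' * (A * B)) * m ^ 2 := by ring
        _ = 2 * h * t * m ^ 2 := by rw [ht']
      rw [hl]
      have hmh : m * h ≤ p * B := mul_le_mul hmp hhB hh.le hp0.le
      have step : 2 * (t * m) * (m * h) ≤ 2 * (t * m) * (p * B) :=
        mul_le_mul_of_nonneg_left hmh (by positivity)
      have pos : (0:ℝ) ≤ t ^ 2 * (p * B) := by positivity
      calc 2 * h * t * m ^ 2 = 2 * (t * m) * (m * h) := by ring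
      _ ≤ 2 * (t * m) * (p * B) := step
      _ ≤ 2 * (t * m) * (p * B) + t ^ 2 * (p * B) := le_add_of_nonneg_right pos
      _ = (2 * t * m + t ^ 2) * p * B := by ring
    · rw [min_eq_right hc]
      have h1mn : (1 - nfx) * (A * (A + p)) = 4 * h * u := by
        have hstep : (1 - nfx) * A = A - p := by rw [sub_mul, one_mul, hnx]
        calc (1 - nfx) * (A * (A + p)) = ((1 - nfx) * A) * (A + p) := by ring
        _ = (A - p) * (A + p) := by rw [hstep]
        _ = A ^ 2 - p ^ 2 := by ring
        _ = 4 * h * u := by rw [hA2]; ring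
      have hpos : (0:ℝ) < A * (A + p) * B := by positivity
      apply le_of_mul_le_mul_right _ hpos
      have hl : t' * m ^ 2 * (A * (A + p) * B) = 2 * h * (t * (m ^ 2 * (A + p))) := by
        calc t' * m ^ 2 * (A * (A + p) * B) = (t' * (A * B)) * (m ^ 2 * (A + p)) := by ring
        _ = 2 * h * t * (m ^ 2 * (A + p)) := by rw [ht']
        _ = 2 * h * (t * (m ^ 2 * (A + p))) := by ring
      have hr : (2 * t * m + t ^ 2) * (1 - nfx) * (A * (A + p) * B)
          = 2 * h * ((2 * t * m + t ^ 2) * (2 * u * B)) := by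
        calc (2 * t * m + t ^ 2) * (1 - nfx) * (A * (A + p) * B)
            = (2 * t * m + t ^ 2) * ((1 - nfx) * (A * (A + p))) * B := by ring
        _ = (2 * t * m + t ^ 2) * (4 * h * u) * B := by rw [h1mn]
        _ = 2 * h * ((2 * t * m + t ^ 2) * (2 * u * B)) := by ring
      rw [hl, hr]
      apply mul_le_mul_of_nonneg_left _ (by positivity : (0:ℝ) ≤ 2 * h)
      -- t * (m^2 * (A+p)) ≤ (2*t*m + t^2) * (2*u*B)
      have c2 : m * q ≤ u * B := mul_le_mul hmu hqB hq0 hu.le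
      have c3 : m * h ≤ u * B := mul_le_mul hmu hhB hh.le hu.le
      have c4 : m * m ≤ u * B := mul_le_mul hmu hmB hm0.le hu.le
      have c1 : m ^ 2 * (A + p) ≤ m ^ 2 * (2 * t + 2 * q + 2 * h) := by
        apply mul_le_mul_of_nonneg_left _ (by positivity)
        linarith
      have d2 : t * m * (m * q) ≤ t * m * (u * B) :=
        mul_le_mul_of_nonneg_left c2 (by positivity)
      have d3 : t * m * (m * h) ≤ t * m * (u * B) :=
        mul_le_mul_of_nonneg_left c3 (by positivity)
      have d4 : t * t * (m * m) ≤ t * t * (u * B) :=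
        mul_le_mul_of_nonneg_left c4 (by positivity)
      calc t * (m ^ 2 * (A + p)) ≤ t * (m ^ 2 * (2 * t + 2 * q + 2 * h)) :=
            mul_le_mul_of_nonneg_left c1 ht0
      _ = 2 * (t * t * (m * m)) + 2 * (t * m * (m * q)) + 2 * (t * m * (m * h)) := by ring
      _ ≤ 2 * (t * t * (u * B)) + 2 * (t * m * (u * B)) + 2 * (t * m * (u * B)) := by
            linarith only [d2, d3, d4]
      _ = (2 * t * m + t ^ 2) * (2 * u * B) := by ring
  calc t' * m ^ 2 ≤ (2 * t * m + t ^ 2) * min nfx (1 - nfx) := hmain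
  _ ≤ _ := mul_le_mul_of_nonneg_left (lowD (f x)) hK

lemma onePoint2 {x y : ℂ} (hx : 0 < x.im) (hy : 0 < y.im) (hxa : x ≠ a) (hya : y ≠ a)
    {m' : ℝ} (hm'0 : 0 < m')
    (hm'x : ∀ w ∈ Metric.sphere (0:ℂ) 1 ∪ {0}, m' ≤ dist (f x) w)
    (hm'y : ∀ w ∈ Metric.sphere (0:ℂ) 1 ∪ {0}, m' ≤ dist (f y) w) :
    dist x y * m' ^ 2 ≤ (2 * dist (f x) (f y) * m' + dist (f x) (f y) ^ 2) *
      Metric.infDist x ({z : ℂ | z.im = 0} ∪ {a}) := by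
  set A := ‖x - (starRingEnd ℂ) a‖ with hA
  set B := ‖y - (starRingEnd ℂ) a‖ with hB
  set h := a.im
  set t := dist x y with htt
  set t' := dist (f x) (f y) with ht't
  set E := Complex.exp (α * Complex.I) with hE
  have hh : 0 < h := ha
  have hAl : x.im + h ≤ A := im_add_le_abs ha hx.le
  have hBl : y.im + h ≤ B := im_add_le_abs ha hy.le
  have hA0 : 0 < A := by linarith [hx]
  have hB0 : 0 < B := by linarith [hy]
  have ht'id : t' * (A * B) = 2 * h * t := dist_f_eq ha hf hx.le hy.le
  have ht0 : 0 ≤ t := dist_nonneg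
  have ht'0 : 0 ≤ t' := dist_nonneg
  have main : ∀ ζ : ℂ, ζ.im = 0 ∨ ζ = a →
      t * m' ^ 2 ≤ (2 * t' * m' + t' ^ 2) * dist x ζ := by
    intro ζ hζ
    have hζim : 0 ≤ ζ.im := by
      rcases hζ with h0 | rfl
      · exact le_of_eq h0.symm
      · exact ha.le
    have hζmem : f ζ ∈ Metric.sphere (0:ℂ) 1 ∪ {0} := by
      rcases hζ with h0 | rfl
      · left
        have : ζ = ((ζ.re : ℝ) : ℂ) := by
          apply Complex.ext <;> simp [h0]
        rw [this]
        exact f_real_sphere ha hf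
      · right
        simp [f_a_eq hf]
    set D := ‖ζ - (starRingEnd ℂ) a‖ with hD
    have hD0 : 0 < D := norm_pos_iff.mpr (sub_conj_ne ha hζim)
    set P := dist (f x) (f ζ) with hP
    set Q := dist (f y) E with hQ
    set C := dist (f ζ) E with hC
    have hPid : P * (A * D) = 2 * h * dist x ζ := dist_f_eq ha hf hx.le hζim
    have hQid : Q * B = 2 * h := dist_f_exp ha hf hy.le
    have hCid : C * D = 2 * h := dist_f_exp ha hf hζim
    have hC0 : 0 < C := by
      rcases dist_nonneg.lt_or_eq (b := C) with hlt | heq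
      · exact hlt
      · exfalso; rw [← heq, zero_mul] at hCid; linarith
    refine crossHelper (r := dist x ζ) (P := P) (Q := Q) (C := C) hm'0 (hm'x _ hζmem)
      (hm'y _ (Or.inl (exp_sphere (α := α)))) hC0 dist_nonneg ht0 ht'0 ?_ ?_
    · -- identity t * (P * Q) = t' * C * dist x ζ
      have hPe : P = 2 * h * dist x ζ / (A * D) := by
        rw [eq_div_iff (by positivity)]; exact hPid
      have hQe : Q = 2 * h / B := by
        rw [eq_div_iff (by positivity)]; exact hQid
      have hCe : C = 2 * h / D := by
        rw [eq_div_iff (by positivity)]; exact hCid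
      have ht'e : t' = 2 * h * t / (A * B) := by
        rw [eq_div_iff (by positivity)]; exact ht'id
      rw [hPe, hQe, hCe, ht'e]
      have hA0' : A ≠ 0 := ne_of_gt hA0
      have hB0' : B ≠ 0 := ne_of_gt hB0
      have hD0' : D ≠ 0 := ne_of_gt hD0
      field_simp
    · calc C ≤ dist (f ζ) (f x) + dist (f x) (f y) + dist (f y) E := dist_triangle4 _ _ _ _
      _ = P + t' + Q := by rw [dist_comm (f ζ) (f x)]
  have hK : (0:ℝ) ≤ 2 * t' * m' + t' ^ 2 := by positivity
  have hmain : t * m' ^ 2 ≤ (2 * t' * m' + t' ^ 2) * min x.im (dist x a) := by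
    rcases le_total x.im (dist x a) with hc | hc
    · rw [min_eq_left hc]
      have hmem : ((x.re : ℝ) : ℂ).im = 0 ∨ ((x.re : ℝ) : ℂ) = a := Or.inl (by simp)
      have hdre : dist x ((x.re : ℝ) : ℂ) = x.im := by
        rw [Complex.dist_eq, show x - ((x.re : ℝ) : ℂ) = (x.im : ℂ) * Complex.I by
          apply Complex.ext <;> simp]
        rw [norm_mul, Complex.norm_real, Real.norm_eq_abs, Complex.norm_I, mul_one, abs_of_pos hx]
      have := main ((x.re : ℝ) : ℂ) hmem
      rwa [hdre] at this
    · rw [min_eq_right hc]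
      exact main a (Or.inr rfl)
  calc t * m' ^ 2 ≤ (2 * t' * m' + t' ^ 2) * min x.im (dist x a) := hmain
  _ ≤ _ := mul_le_mul_of_nonneg_left (lowH hx) hK

end Main

end MobiusJdistAux

open MobiusJdistAux in
/-- Any Möbius transformation `f(z) = e^{iα}(z-a)/(z-ā)` of `ℍ² \ {a}` onto
`𝔻 \ {0}` with `f(a) = 0` is `2`-bilipschitz with respect to the distance
ratio metrics of the punctured domains. -/
theorem mobius_punctured_halfplane_to_disk_jdist_bilipschitz
    (a : ℂ) (ha : 0 < a.im) (α : ℝ) (f : ℂ → ℂ)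
    (hf : ∀ z, f z = Complex.exp (α * Complex.I) * (z - a) / (z - (starRingEnd ℂ) a)) :
    ∀ x ∈ {z : ℂ | 0 < z.im} \ {a}, ∀ y ∈ {z : ℂ | 0 < z.im} \ {a},
      (1 / 2) * jdist ({z : ℂ | 0 < z.im} \ {a}) x y ≤
          jdist (Metric.ball (0 : ℂ) 1 \ {0}) (f x) (f y) ∧
        jdist (Metric.ball (0 : ℂ) 1 \ {0}) (f x) (f y) ≤
          2 * jdist ({z : ℂ | 0 < z.im} \ {a}) x y := by
  intro x hx y hy
  obtain ⟨hx1, hx2'⟩ := hx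
  obtain ⟨hy1, hy2'⟩ := hy
  have hx1 : 0 < x.im := hx1
  have hy1 : 0 < y.im := hy1
  have hx2 : x ≠ a := hx2'
  have hy2 : y ≠ a := hy2'
  simp only [jdist, frontierH ha, frontierD]
  set F : Set ℂ := {z : ℂ | z.im = 0} ∪ {a} with hF
  set F' : Set ℂ := Metric.sphere (0:ℂ) 1 ∪ {0} with hF'
  set dx := Metric.infDist x F with hdx
  set dy := Metric.infDist y F with hdy
  set dfx := Metric.infDist (f x) F' with hdfx
  set dfy := Metric.infDist (f y) F' with hdfy
  set t := dist x y with htt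
  set t' := dist (f x) (f y) with ht't
  set m := min dx dy with hm
  set m' := min dfx dfy with hm'
  have ht0 : 0 ≤ t := dist_nonneg
  have ht'0 : 0 ≤ t' := dist_nonneg
  -- positivity of m
  have hdx0 : 0 < dx := lt_of_lt_of_le (lt_min hx1 (dist_pos.2 hx2)) (lowH hx1)
  have hdy0 : 0 < dy := lt_of_lt_of_le (lt_min hy1 (dist_pos.2 hy2)) (lowH hy1)
  have hm0 : 0 < m := lt_min hdx0 hdy0
  -- positivity of m'
  have hnfx := normf_lt_one ha hf hx1 hx2
  have hnfy := normf_lt_one ha hf hy1 hy2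
  have hdfx0 : 0 < dfx :=
    lt_of_lt_of_le (lt_min hnfx.1 (by linarith [hnfx.2])) (lowD (f x))
  have hdfy0 : 0 < dfy :=
    lt_of_lt_of_le (lt_min hnfy.1 (by linarith [hnfy.2])) (lowD (f y))
  have hm'0 : 0 < m' := lt_min hdfx0 hdfy0
  -- upper bounds on m
  have hdre : ∀ z : ℂ, 0 < z.im → dist z ((z.re : ℝ) : ℂ) = z.im := by
    intro z hz
    rw [Complex.dist_eq, show z - ((z.re : ℝ) : ℂ) = (z.im : ℂ) * Complex.I by
      apply Complex.ext <;> simp]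
    rw [norm_mul, Complex.norm_real, Real.norm_eq_abs, Complex.norm_I, mul_one, abs_of_pos hz]
  have hdxu : dx ≤ x.im := by
    have := Metric.infDist_le_dist_of_mem (x := x)
      (show ((x.re : ℝ) : ℂ) ∈ F from Or.inl (by simp))
    rwa [hdre x hx1] at this
  have hdyv : dy ≤ y.im := by
    have := Metric.infDist_le_dist_of_mem (x := y)
      (show ((y.re : ℝ) : ℂ) ∈ F from Or.inl (by simp))
    rwa [hdre y hy1] at this
  have hdxp : dx ≤ dist x a := Metric.infDist_le_dist_of_mem (Or.inr rfl)
  have hdyq : dy ≤ dist y a := Metric.infDist_le_dist_of_mem (Or.inr rfl)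
  have hmu : m ≤ x.im := le_trans (min_le_left _ _) hdxu
  have hmp : m ≤ dist x a := le_trans (min_le_left _ _) hdxp
  have hmv : m ≤ y.im := le_trans (min_le_right _ _) hdyv
  have hmq : m ≤ dist y a := le_trans (min_le_right _ _) hdyq
  -- key 1 : t' * m^2 ≤ (2tm + t²) * m'
  have key1 : t' * m ^ 2 ≤ (2 * t * m + t ^ 2) * m' := by
    rcases le_total dfx dfy with hc | hc
    · rw [hm', min_eq_left hc]
      exact onePoint1 ha hf hx1 hy1 hx2 hy2 hm0 hmu hmp hmv hmq
    · rw [hm', min_eq_right hc]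
      have := onePoint1 ha hf hy1 hx1 hy2 hx2 hm0 hmv hmq hmu hmp
      rwa [dist_comm (f y) (f x), dist_comm y x] at this
  -- key 2 : t * m'^2 ≤ (2t'm' + t'²) * m
  have hm'x : ∀ w ∈ F', m' ≤ dist (f x) w := fun w hw =>
    le_trans (min_le_left _ _) (Metric.infDist_le_dist_of_mem hw)
  have hm'y : ∀ w ∈ F', m' ≤ dist (f y) w := fun w hw =>
    le_trans (min_le_right _ _) (Metric.infDist_le_dist_of_mem hw)
  have key2 : t * m' ^ 2 ≤ (2 * t' * m' + t' ^ 2) * m := by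
    rcases le_total dx dy with hc | hc
    · rw [hm, min_eq_left hc]
      exact onePoint2 ha hf hx1 hy1 hx2 hy2 hm'0 hm'x hm'y
    · rw [hm, min_eq_right hc]
      have := onePoint2 ha hf hy1 hx1 hy2 hx2 hm'0 hm'y hm'x
      rwa [dist_comm (f y) (f x), dist_comm y x] at this
  constructor
  · have hlog := logstep hm'0 hm0 ht0 key2
    linarith
  · have hlog := logstep hm0 hm'0 ht'0 key1
    linarith
end

section
/- Let k ∈ (1, ∞). Then the function f₁(θ) = (k sin θ)/(1 − sin θ) − (sin kθ)/(1 − sin kθ) is strictly decreasing on the interval (0, π/(2k)), with f₁(θ) → 0 as θ → 0⁺ and f₁(θ) → −∞ as θ → (π/(2k))⁻; in particular f₁(θ) < 0 for all θ ∈ (0, π/(2k)). -/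
open Real Filter Topology Set

lemma sin_lt_one'' {x : ℝ} (h0 : 0 < x) (h1 : x < π/2) : Real.sin x < 1 := by
  have hpi := Real.pi_pos
  have := Real.strictMonoOn_sin (a := x) (b := π/2)
    (Set.mem_Icc.mpr ⟨by linarith, by linarith⟩)
    (Set.mem_Icc.mpr ⟨by linarith, le_refl _⟩) h1
  simpa using this

lemma h_mono {a b : ℝ} (ha : 0 < a) (hab : a < b) (hb : b < π/2) :
    Real.cos a / (1 - Real.sin a)^2 < Real.cos b / (1 - Real.sin b)^2 := by
  have hpi := Real.pi_pos
  have hsa : 0 < Real.sin a := Real.sin_pos_of_pos_of_lt_pi ha (by linarith)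
  have hsab : Real.sin a < Real.sin b :=
    Real.strictMonoOn_sin (Set.mem_Icc.mpr ⟨by linarith, by linarith⟩)
      (Set.mem_Icc.mpr ⟨by linarith, by linarith⟩) hab
  have hsb1 : Real.sin b < 1 := sin_lt_one'' (by linarith) hb
  have hsa1 : Real.sin a < 1 := by linarith
  have h1a : (0:ℝ) < 1 - Real.sin a := by linarith
  have h1b : (0:ℝ) < 1 - Real.sin b := by linarith
  have hca : 0 < Real.cos a := Real.cos_pos_of_mem_Ioo ⟨by linarith, by linarith⟩
  have hcb : 0 < Real.cos b := Real.cos_pos_of_mem_Ioo ⟨by linarith, by linarith⟩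
  have pa : Real.cos a ^ 2 = 1 - Real.sin a ^ 2 := by
    have := Real.sin_sq_add_cos_sq a; linarith
  have pb : Real.cos b ^ 2 = 1 - Real.sin b ^ 2 := by
    have := Real.sin_sq_add_cos_sq b; linarith
  rw [div_lt_div_iff₀ (by positivity) (by positivity)]
  have key : (1 + Real.sin a) * (1 - Real.sin b)^3 < (1 + Real.sin b) * (1 - Real.sin a)^3 := by
    have h3 : (1 - Real.sin b)^3 < (1 - Real.sin a)^3 :=
      pow_lt_pow_left₀ (by linarith) (by linarith) (by norm_num)
    nlinarith [pow_pos h1b 3]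
  apply lt_of_pow_lt_pow_left₀ 2 (by positivity)
  have e1 : (Real.cos a * (1 - Real.sin b)^2)^2
      = (1 - Real.sin a)*(1 - Real.sin b) * ((1 + Real.sin a)*(1 - Real.sin b)^3) := by
    rw [mul_pow, pa]; ring
  have e2 : (Real.cos b * (1 - Real.sin a)^2)^2
      = (1 - Real.sin a)*(1 - Real.sin b) * ((1 + Real.sin b)*(1 - Real.sin a)^3) := by
    rw [mul_pow, pb]; ring
  rw [e1, e2]
  exact mul_lt_mul_of_pos_left key (mul_pos h1a h1b)

lemma f1_hasDerivAt (k θ : ℝ) (hs : Real.sin θ ≠ 1) (hks : Real.sin (k*θ) ≠ 1) :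
    HasDerivAt (fun θ : ℝ =>
        k * Real.sin θ / (1 - Real.sin θ) - Real.sin (k * θ) / (1 - Real.sin (k * θ)))
      (k * (Real.cos θ / (1 - Real.sin θ)^2) - k * (Real.cos (k*θ) / (1 - Real.sin (k*θ))^2)) θ := by
  have hne1 : 1 - Real.sin θ ≠ 0 := sub_ne_zero.mpr (Ne.symm hs)
  have hne2 : 1 - Real.sin (k*θ) ≠ 0 := sub_ne_zero.mpr (Ne.symm hks)
  have d1 : HasDerivAt (fun θ : ℝ => k * Real.sin θ) (k * Real.cos θ) θ :=
    (Real.hasDerivAt_sin θ).const_mul k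
  have d2 : HasDerivAt (fun θ : ℝ => 1 - Real.sin θ) (-Real.cos θ) θ :=
    (Real.hasDerivAt_sin θ).const_sub 1
  have d3 : HasDerivAt (fun θ : ℝ => k * Real.sin θ / (1 - Real.sin θ)) _ θ := d1.div d2 hne1
  have di : HasDerivAt (fun θ : ℝ => k * θ) k θ := by
    simpa using (hasDerivAt_id θ).const_mul k
  have dsin : HasDerivAt (fun θ : ℝ => Real.sin (k*θ)) (Real.cos (k*θ) * k) θ :=
    (Real.hasDerivAt_sin (k*θ)).comp θ di
  have d4 : HasDerivAt (fun θ : ℝ => 1 - Real.sin (k*θ)) (-(Real.cos (k*θ) * k)) θ :=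
    dsin.const_sub 1
  have d5 : HasDerivAt (fun θ : ℝ => Real.sin (k*θ) / (1 - Real.sin (k*θ))) _ θ := dsin.div d4 hne2
  refine (d3.sub d5).congr_deriv ?_
  field_simp
  ring


/-- For `k > 1`, the function `f₁(θ) = k sin θ/(1 - sin θ) - sin kθ/(1 - sin kθ)`
is strictly decreasing on `(0, π/(2k))`, tends to `0` as `θ → 0⁺` and to `-∞`
as `θ → (π/(2k))⁻`; in particular it is negative on `(0, π/(2k))`. -/
theorem f1_strictAnti_neg (k : ℝ) (hk : 1 < k) :
    StrictAntiOn (fun θ : ℝ =>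
        k * Real.sin θ / (1 - Real.sin θ) - Real.sin (k * θ) / (1 - Real.sin (k * θ)))
      (Set.Ioo 0 (π / (2 * k))) ∧
    Tendsto (fun θ : ℝ =>
        k * Real.sin θ / (1 - Real.sin θ) - Real.sin (k * θ) / (1 - Real.sin (k * θ)))
      (𝓝[>] 0) (𝓝 0) ∧
    Tendsto (fun θ : ℝ =>
        k * Real.sin θ / (1 - Real.sin θ) - Real.sin (k * θ) / (1 - Real.sin (k * θ)))
      (𝓝[<] (π / (2 * k))) atBot ∧
    ∀ θ ∈ Set.Ioo 0 (π / (2 * k)),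
      k * Real.sin θ / (1 - Real.sin θ) - Real.sin (k * θ) / (1 - Real.sin (k * θ)) < 0 := by
  have hpi := Real.pi_pos
  have hk0 : (0:ℝ) < k := by linarith
  set F : ℝ → ℝ := fun θ =>
    k * Real.sin θ / (1 - Real.sin θ) - Real.sin (k * θ) / (1 - Real.sin (k * θ)) with hF
  set c : ℝ := π / (2 * k) with hc
  have hc0 : 0 < c := by positivity
  have hkc : k * c = π / 2 := by rw [hc]; field_simp
  have hcpi2 : c < π / 2 := by
    rw [hc, div_lt_div_iff₀ (by linarith) (by norm_num)]
    nlinarith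
  -- basic facts on the interval
  have hfacts : ∀ θ ∈ Set.Ioo (0:ℝ) c, 0 < θ ∧ θ < π/2 ∧ θ < k*θ ∧ k*θ < π/2 ∧
      Real.sin θ < 1 ∧ Real.sin (k*θ) < 1 := by
    intro θ ⟨h1, h2⟩
    have hθk : θ < k * θ := (lt_mul_iff_one_lt_left h1).mpr hk
    have hkθ : k * θ < π/2 := by
      calc k * θ < k * c := by exact (mul_lt_mul_iff_right₀ hk0).mpr h2
      _ = π/2 := hkc
    have hθpi : θ < π/2 := by linarith
    exact ⟨h1, hθpi, hθk, hkθ, sin_lt_one'' h1 hθpi, sin_lt_one'' (by linarith) hkθ⟩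
  have hderiv : ∀ θ ∈ Set.Ioo (0:ℝ) c, HasDerivAt F
      (k * (Real.cos θ / (1 - Real.sin θ)^2) - k * (Real.cos (k*θ) / (1 - Real.sin (k*θ))^2)) θ := by
    intro θ hθ
    obtain ⟨h1, h2, h3, h4, h5, h6⟩ := hfacts θ hθ
    exact f1_hasDerivAt k θ (ne_of_lt h5) (ne_of_lt h6)
  have hcont : ContinuousOn F (Set.Ioo 0 c) := fun θ hθ =>
    (hderiv θ hθ).continuousAt.continuousWithinAt
  -- strict antitonicity
  have hanti : StrictAntiOn F (Set.Ioo 0 c) := by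
    apply strictAntiOn_of_deriv_neg (convex_Ioo _ _) hcont
    intro θ hθ
    rw [interior_Ioo] at hθ
    obtain ⟨h1, h2, h3, h4, h5, h6⟩ := hfacts θ hθ
    rw [(hderiv θ hθ).deriv]
    have := h_mono h1 h3 h4
    nlinarith
  -- limit at 0
  have hlim0 : Tendsto F (𝓝[>] (0:ℝ)) (𝓝 0) := by
    have hcont0 : ContinuousAt F 0 := by
      have e1 : (1:ℝ) - Real.sin 0 ≠ 0 := by simp
      have e2 : (1:ℝ) - Real.sin (k * 0) ≠ 0 := by simp
      apply ContinuousAt.sub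
      · exact ContinuousAt.div (by fun_prop) (by fun_prop) e1
      · exact ContinuousAt.div (by fun_prop) (by fun_prop) e2
    have := hcont0.tendsto.mono_left (nhdsWithin_le_nhds (s := Set.Ioi (0:ℝ)))
    have hF0 : F 0 = 0 := by simp [hF]
    rwa [hF0] at this
  -- limit at c
  have hlimc : Tendsto F (𝓝[<] c) atBot := by
    have hsinc : Real.sin c < 1 := sin_lt_one'' hc0 hcpi2
    have hne : (1:ℝ) - Real.sin c ≠ 0 := sub_ne_zero.mpr (by linarith)
    have t1 : Tendsto (fun θ : ℝ => k * Real.sin θ / (1 - Real.sin θ)) (𝓝[<] c)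
        (𝓝 (k * Real.sin c / (1 - Real.sin c))) := by
      have : ContinuousAt (fun θ : ℝ => k * Real.sin θ / (1 - Real.sin θ)) c :=
        ContinuousAt.div (by fun_prop) (by fun_prop) hne
      exact this.tendsto.mono_left nhdsWithin_le_nhds
    have t2 : Tendsto (fun θ : ℝ => Real.sin (k*θ)) (𝓝[<] c) (𝓝[<] (1:ℝ)) := by
      apply tendsto_nhdsWithin_of_tendsto_nhds_of_eventually_within
      · have : ContinuousAt (fun θ : ℝ => Real.sin (k*θ)) c := by fun_prop
        have h1 : Real.sin (k*c) = 1 := by rw [hkc]; exact Real.sin_pi_div_two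
        have := this.tendsto.mono_left (nhdsWithin_le_nhds (s := Set.Iio c))
        rwa [h1] at this
      · filter_upwards [Ioo_mem_nhdsLT hc0] with θ hθ
        exact (hfacts θ hθ).2.2.2.2.2
    have t3 : Tendsto (fun x : ℝ => x / (1-x)) (𝓝[<] (1:ℝ)) atTop := by
      have h1x : Tendsto (fun x : ℝ => 1 - x) (𝓝[<] (1:ℝ)) (𝓝[>] (0:ℝ)) := by
        apply tendsto_nhdsWithin_of_tendsto_nhds_of_eventually_within
        · have : Tendsto (fun x : ℝ => 1 - x) (𝓝 (1:ℝ)) (𝓝 (1-1)) :=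
            (continuous_const.sub continuous_id).tendsto 1
          simpa using this.mono_left nhdsWithin_le_nhds
        · filter_upwards [eventually_mem_nhdsWithin] with x hx
          simp only [Set.mem_Iio] at hx
          simpa using hx
      have hinv : Tendsto (fun x : ℝ => (1-x)⁻¹) (𝓝[<] (1:ℝ)) atTop :=
        tendsto_inv_nhdsGT_zero.comp h1x
      have hid : Tendsto (fun x : ℝ => x) (𝓝[<] (1:ℝ)) (𝓝 1) :=
        (continuous_id.tendsto 1).mono_left nhdsWithin_le_nhds
      have := hid.pos_mul_atTop one_pos hinv
      simpa [div_eq_mul_inv] using this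
    have t4 : Tendsto (fun θ : ℝ => Real.sin (k*θ) / (1 - Real.sin (k*θ))) (𝓝[<] c) atTop :=
      t3.comp t2
    have := t1.add_atBot (tendsto_neg_atTop_atBot.comp t4)
    simpa [hF, sub_eq_add_neg, Function.comp] using this
  -- negativity
  have hneg : ∀ θ ∈ Set.Ioo (0:ℝ) c, F θ < 0 := by
    have hnonpos : ∀ θ ∈ Set.Ioo (0:ℝ) c, F θ ≤ 0 := by
      intro θ hθ
      apply ge_of_tendsto hlim0
      filter_upwards [Ioo_mem_nhdsGT hθ.1] with x hx
      exact le_of_lt (hanti ⟨hx.1, lt_trans hx.2 hθ.2⟩ hθ hx.2)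
    intro θ hθ
    have hθ2 : θ/2 ∈ Set.Ioo (0:ℝ) c := ⟨by linarith [hθ.1], by linarith [hθ.1, hθ.2]⟩
    calc F θ < F (θ/2) := hanti hθ2 hθ (by linarith [hθ.1])
    _ ≤ 0 := hnonpos _ hθ2
  exact ⟨hanti, hlim0, hlimc, hneg⟩
end

section
/- Let k ∈ (1, ∞) and θ ∈ (0, π/(2k)). Then the function f₂(r) = (1 − (1 − sin θ)·r) / (1 − (1 − sin kθ)·r^k) is strictly decreasing on (0, 1), with f₂(r) → 1 as r → 0⁺ and f₂(r) → sin θ / sin kθ as r → 1⁻. -/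
open Real Filter Topology Set

lemma my_one_sub_sin_le_cos {t : ℝ} (h1 : 0 ≤ t) (h2 : t ≤ π / 2) :
    1 - Real.sin t ≤ Real.cos t := by
  have hs := Real.sin_nonneg_of_nonneg_of_le_pi h1 (by linarith [Real.pi_pos])
  have hc := Real.cos_nonneg_of_mem_Icc ⟨by linarith, h2⟩
  nlinarith [Real.sin_sq_add_cos_sq t, Real.sin_le_one t]

lemma my_G_anti : AntitoneOn (fun t : ℝ => t / Real.sin t - t) (Set.Ioo 0 (π / 2)) := by
  have hD : Convex ℝ (Set.Ioo (0:ℝ) (π/2)) := convex_Ioo _ _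
  have hder : ∀ t ∈ Set.Ioo (0:ℝ) (π/2),
      HasDerivAt (fun t : ℝ => t / Real.sin t - t)
        ((1 * Real.sin t - t * Real.cos t) / (Real.sin t) ^ 2 - 1) t := by
    intro t ht
    have hs : 0 < Real.sin t := Real.sin_pos_of_pos_of_lt_pi ht.1 (by linarith [ht.2, Real.pi_pos])
    exact ((hasDerivAt_id t).div (Real.hasDerivAt_sin t) hs.ne').sub (hasDerivAt_id t)
  apply antitoneOn_of_deriv_nonpos hD
  · exact fun t ht => (hder t ht).continuousAt.continuousWithinAt
  · rw [interior_Ioo]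
    exact fun t ht => (hder t ht).differentiableAt.differentiableWithinAt
  · rw [interior_Ioo]
    intro t ht
    rw [(hder t ht).deriv]
    have hs : 0 < Real.sin t := Real.sin_pos_of_pos_of_lt_pi ht.1 (by linarith [ht.2, Real.pi_pos])
    have hc : 0 ≤ Real.cos t := Real.cos_nonneg_of_mem_Icc ⟨by linarith [ht.1, Real.pi_pos], ht.2.le⟩
    have hsc : 1 - Real.sin t ≤ Real.cos t := my_one_sub_sin_le_cos ht.1.le ht.2.le
    have hst : Real.sin t < t := Real.sin_lt ht.1
    have key : 1 * Real.sin t - t * Real.cos t ≤ (Real.sin t) ^ 2 := by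
      nlinarith [mul_nonneg (sub_nonneg.2 hst.le) hc,
        mul_nonneg hs.le (by linarith : (0:ℝ) ≤ Real.cos t - (1 - Real.sin t))]
    have := div_le_one_of_le₀ key (by positivity)
    linarith [this]

lemma my_amgm {k r : ℝ} (hk : 1 < k) (hr0 : 0 < r) (hr1 : r < 1) :
    k * r ^ (k - 1) ≤ (k - 1) * r ^ k + 1 := by
  have hk0 : (0:ℝ) < k := by linarith
  have hg := Real.geom_mean_le_arith_mean2_weighted
    (w₁ := (k-1)/k) (w₂ := 1/k) (p₁ := r ^ k) (p₂ := 1)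
    (div_nonneg (by linarith) hk0.le) (by positivity) (Real.rpow_pos_of_pos hr0 k).le zero_le_one
    (by field_simp; ring)
  rw [Real.one_rpow, mul_one, mul_one] at hg
  have he : (r ^ k) ^ ((k-1)/k) = r ^ (k-1) := by
    rw [← Real.rpow_mul hr0.le]
    congr 1
    field_simp
  rw [he] at hg
  have h2 := mul_le_mul_of_nonneg_left hg hk0.le
  have e : k * ((k-1)/k * r ^ k + 1/k) = (k-1) * r ^ k + 1 := by
    field_simp
  rw [e] at h2
  linarith

/-- For `k > 1` and `θ ∈ (0, π/(2k))`, the function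
`f₂(r) = (1 - (1 - sin θ) r)/(1 - (1 - sin kθ) r^k)` is strictly decreasing on
`(0,1)`, tends to `1` as `r → 0⁺` and to `sin θ / sin kθ` as `r → 1⁻`. -/
theorem f2_strictAnti (k : ℝ) (hk : 1 < k) (θ : ℝ) (hθ : θ ∈ Set.Ioo 0 (π / (2 * k))) :
    StrictAntiOn (fun r : ℝ =>
        (1 - (1 - Real.sin θ) * r) / (1 - (1 - Real.sin (k * θ)) * r ^ k))
      (Set.Ioo (0 : ℝ) 1) ∧
    Tendsto (fun r : ℝ =>
        (1 - (1 - Real.sin θ) * r) / (1 - (1 - Real.sin (k * θ)) * r ^ k))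
      (𝓝[>] 0) (𝓝 1) ∧
    Tendsto (fun r : ℝ =>
        (1 - (1 - Real.sin θ) * r) / (1 - (1 - Real.sin (k * θ)) * r ^ k))
      (𝓝[<] 1) (𝓝 (Real.sin θ / Real.sin (k * θ))) := by
  obtain ⟨hθ0, hθ1⟩ := hθ
  have hk0 : (0:ℝ) < k := by linarith
  have hkθ2 : k * θ < π / 2 := by
    have := (lt_div_iff₀ (by positivity : (0:ℝ) < 2 * k)).mp hθ1
    nlinarith
  have hθθ : θ < k * θ := by nlinarith
  have hθ2 : θ < π / 2 := lt_trans hθθ hkθ2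
  set s := Real.sin θ with hs_def
  set S := Real.sin (k * θ) with hS_def
  have hs : 0 < s := Real.sin_pos_of_pos_of_lt_pi hθ0 (by linarith [Real.pi_pos])
  have hS : 0 < S := Real.sin_pos_of_pos_of_lt_pi (by linarith) (by linarith [Real.pi_pos])
  have hcθ : 0 < Real.cos θ := Real.cos_pos_of_mem_Ioo ⟨by linarith [Real.pi_pos], hθ2⟩
  have hckθ : 0 < Real.cos (k * θ) := Real.cos_pos_of_mem_Ioo ⟨by linarith [Real.pi_pos], hkθ2⟩
  have hs1 : s < 1 := by nlinarith [Real.sin_sq_add_cos_sq θ]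
  have hS1 : S < 1 := by nlinarith [Real.sin_sq_add_cos_sq (k * θ)]
  -- key inequality
  have hGmono := my_G_anti (a := θ) (b := k * θ) ⟨hθ0, hθ2⟩ ⟨by linarith, hkθ2⟩ hθθ.le
  simp only at hGmono
  rw [← hs_def, ← hS_def] at hGmono
  have key : k * s * (1 - S) ≤ S * (1 - s) := by
    have h2 := mul_le_mul_of_nonneg_right hGmono (mul_pos hs hS).le
    have l1 : (k * θ / S - k * θ) * (s * S) = k * θ * s - k * θ * s * S := by
      field_simp
    have r1 : (θ / s - θ) * (s * S) = θ * S - θ * s * S := by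
      field_simp
    rw [l1, r1] at h2
    have h3 : θ * (k * s * (1 - S)) ≤ θ * (S * (1 - s)) := by linear_combination h2
    exact le_of_mul_le_mul_left h3 hθ0
  -- denominator positivity and derivative
  have hdenpos : ∀ r ∈ Set.Ioo (0:ℝ) 1, 0 < 1 - (1 - S) * r ^ k := by
    intro r hr
    have hx1 : r ^ k < 1 := Real.rpow_lt_one hr.1.le hr.2 hk0
    have hx0 : 0 < r ^ k := Real.rpow_pos_of_pos hr.1 k
    nlinarith
  have hderiv : ∀ r ∈ Set.Ioo (0:ℝ) 1,
      HasDerivAt (fun r : ℝ => (1 - (1 - s) * r) / (1 - (1 - S) * r ^ k))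
        (((-(1 - s)) * (1 - (1 - S) * r ^ k) -
          (1 - (1 - s) * r) * (-((1 - S) * (k * r ^ (k - 1))))) /
          (1 - (1 - S) * r ^ k) ^ 2) r := by
    intro r hr
    have hnum : HasDerivAt (fun r : ℝ => 1 - (1 - s) * r) (-(1 - s)) r := by
      simpa using ((hasDerivAt_id r).const_mul (1 - s)).const_sub (1:ℝ)
    have hpow : HasDerivAt (fun r : ℝ => r ^ k) (k * r ^ (k - 1)) r :=
      Real.hasDerivAt_rpow_const (Or.inl hr.1.ne')
    have hden : HasDerivAt (fun r : ℝ => 1 - (1 - S) * r ^ k)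
        (-((1 - S) * (k * r ^ (k - 1)))) r := (hpow.const_mul (1 - S)).const_sub (1:ℝ)
    exact hnum.div hden (hdenpos r hr).ne'
  refine ⟨?_, ?_, ?_⟩
  · apply strictAntiOn_of_deriv_neg (convex_Ioo 0 1)
    · exact fun r hr => (hderiv r hr).continuousAt.continuousWithinAt
    · rw [interior_Ioo]
      intro r hr
      rw [(hderiv r hr).deriv]
      apply div_neg_of_neg_of_pos
      · have hr0 := hr.1; have hr1 := hr.2
        set x := r ^ k with hx_def
        set y := r ^ (k - 1) with hy_def
        have hx1 : x < 1 := Real.rpow_lt_one hr0.le hr1 hk0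
        have hx0 : 0 < x := Real.rpow_pos_of_pos hr0 k
        have hy0 : 0 < y := Real.rpow_pos_of_pos hr0 (k - 1)
        have hxy : y * r = x := by
          rw [hx_def, hy_def]
          have h := Real.rpow_add hr0 (k - 1) 1
          rw [Real.rpow_one] at h
          rw [← h]; ring_nf
        have hAM : k * y ≤ (k - 1) * x + 1 := my_amgm hk hr0 hr1
        have h1 : (1 - S) * (k * y) ≤ (1 - S) * ((k - 1) * x + 1) :=
          mul_le_mul_of_nonneg_left hAM (by linarith)
        have h2 : (k - 1) * s * (1 - S) * x < (k - 1) * s * (1 - S) * 1 := by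
          exact mul_lt_mul_of_pos_left hx1
            (mul_pos (mul_pos (by linarith : (0:ℝ) < k - 1) hs) (by linarith : (0:ℝ) < 1 - S))
        have hnumeq : (-(1 - s)) * (1 - (1 - S) * x) -
            (1 - (1 - s) * r) * (-((1 - S) * (k * y))) =
            (s - 1) + (1 - s) * (1 - S) * x + (1 - S) * (k * y)
              - (1 - s) * (1 - S) * (k * x) := by
          rw [← hxy]; ring
        rw [hnumeq]
        nlinarith [h1, h2, key]
      · exact pow_pos (hdenpos r hr) 2
  · have hid0 : Tendsto (fun r : ℝ => r) (𝓝[>] (0:ℝ)) (𝓝 0) :=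
      tendsto_id.mono_right nhdsWithin_le_nhds
    have hpow0 : Tendsto (fun r : ℝ => r ^ k) (𝓝[>] (0:ℝ)) (𝓝 0) := by
      have hc : ContinuousAt (fun r : ℝ => r ^ k) 0 :=
        Real.continuousAt_rpow_const 0 k (Or.inr hk0.le)
      have h2 : Tendsto (fun r : ℝ => r ^ k) (𝓝[>] (0:ℝ)) (𝓝 ((0:ℝ) ^ k)) :=
        hc.tendsto.mono_left nhdsWithin_le_nhds
      simpa [Real.zero_rpow hk0.ne'] using h2
    have hn0 : Tendsto (fun r : ℝ => 1 - (1 - s) * r) (𝓝[>] (0:ℝ)) (𝓝 1) := by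
      simpa using (hid0.const_mul (1 - s)).const_sub (1:ℝ)
    have hd0 : Tendsto (fun r : ℝ => 1 - (1 - S) * r ^ k) (𝓝[>] (0:ℝ)) (𝓝 1) := by
      simpa using (hpow0.const_mul (1 - S)).const_sub (1:ℝ)
    have h := hn0.div hd0 one_ne_zero
    rw [div_one] at h
    exact h
  · have hid1 : Tendsto (fun r : ℝ => r) (𝓝[<] (1:ℝ)) (𝓝 1) :=
      tendsto_id.mono_right nhdsWithin_le_nhds
    have hpow1 : Tendsto (fun r : ℝ => r ^ k) (𝓝[<] (1:ℝ)) (𝓝 1) := by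
      have hc : ContinuousAt (fun r : ℝ => r ^ k) 1 :=
        Real.continuousAt_rpow_const 1 k (Or.inl one_ne_zero)
      have h2 : Tendsto (fun r : ℝ => r ^ k) (𝓝[<] (1:ℝ)) (𝓝 ((1:ℝ) ^ k)) :=
        hc.tendsto.mono_left nhdsWithin_le_nhds
      simpa [Real.one_rpow] using h2
    have hn1 : Tendsto (fun r : ℝ => 1 - (1 - s) * r) (𝓝[<] (1:ℝ)) (𝓝 (1 - (1 - s) * 1)) :=
      (hid1.const_mul (1 - s)).const_sub (1:ℝ)
    have hd1 : Tendsto (fun r : ℝ => 1 - (1 - S) * r ^ k) (𝓝[<] (1:ℝ)) (𝓝 (1 - (1 - S) * 1)) :=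
      (hpow1.const_mul (1 - S)).const_sub (1:ℝ)
    have hne : (1 - (1 - S) * 1) ≠ 0 := by simp; linarith
    have := hn1.div hd1 hne
    have heq : (1 - (1 - s) * 1) / (1 - (1 - S) * 1) = s / S := by ring_nf
    rwa [heq] at this
end
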